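/- arXiv:1511.08190 — 5 statements merged into one kernel-verified Lean document; each statement's English description precedes it below -/
import Mathlib

section
/- Second-moment formula of the exceedance process (Proposition on the autocovariance structure): in the slice model with κ > 0, ∫₀^∞ ∫₀^∞ x₀ x_h [ ∫_{ℝ³} Λ₀ Λₕ exp(−Λ₀(κ+x₀) − Λₕ(κ+x_h)) dμ ] dx₀ dx_h = ∫_κ^∞ ∫_κ^∞ (1 + u₀/β)^{−b₀} (1 + (u₀+u_h)/β)^{−b₀ₕ} (1 + u_h/β)^{−bₕ} du₀ du_h. Equivalently, ∫_{ℝ³} e^{−κ(Λ₀+Λₕ)}/(Λ₀Λₕ) dμ equals the same double integral; this is the quantity E[X₀X_h] of the latent trawl model. -/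
open MeasureTheory ProbabilityTheory Real Set

/-- The slice measure: product of three Gamma distributions with shapes
`b₀, b₀ₕ, bₕ` and common rate `β`. -/
noncomputable def sliceMeasure (b₀ b₀ₕ bₕ β : ℝ) : Measure (ℝ × ℝ × ℝ) :=
  (gammaMeasure b₀ β).prod ((gammaMeasure b₀ₕ β).prod (gammaMeasure bₕ β))

section ExceedAuxSection
open scoped ENNReal

namespace ExceedAux

variable {β b₀ b₀ₕ bₕ κ : ℝ}



lemma mul_exp_le {l x : ℝ} (hl : 0 ≤ l) (hx : 0 ≤ x) :
    x * (l * Real.exp (-(l * x))) ≤ 1 := by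
  have h1 : l * x ≤ Real.exp (l * x) := le_trans (by linarith) (Real.add_one_le_exp _)
  calc x * (l * Real.exp (-(l * x))) = (l * x) * Real.exp (-(l * x)) := by ring
    _ ≤ Real.exp (l * x) * Real.exp (-(l * x)) :=
        mul_le_mul_of_nonneg_right h1 (Real.exp_pos _).le
    _ = 1 := by rw [← Real.exp_add]; simp

lemma gamma_ae_pos {b r : ℝ} (hb : 0 < b) (hr : 0 < r) :
    ∀ᵐ x ∂(gammaMeasure b r), 0 < x := by
  rw [ae_iff]
  have h : {x : ℝ | ¬ 0 < x} = Iic 0 := by ext x; simp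
  rw [h, gammaMeasure, withDensity_apply _ measurableSet_Iic]
  have h2 : ∫⁻ x in Iic 0, gammaPDF b r x = ∫⁻ x in Iio 0, gammaPDF b r x :=
    setLIntegral_congr (Iio_ae_eq_Iic (a := (0:ℝ))).symm
  rw [h2, lintegral_gammaPDF_of_nonpos le_rfl]

lemma gammaPDF_mul_exp {b r t : ℝ} (hb : 0 < b) (hr : 0 < r) (hrt : 0 < r + t) (x : ℝ) :
    gammaPDF b r x * ENNReal.ofReal (Real.exp (-(t * x)))
      = ENNReal.ofReal ((r / (r + t)) ^ b) * gammaPDF b (r + t) x := by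
  rcases le_or_gt 0 x with hx | hx
  · rw [gammaPDF_of_nonneg hx, gammaPDF_of_nonneg hx, ← ENNReal.ofReal_mul (by positivity),
      ← ENNReal.ofReal_mul (by positivity)]
    have hΓ : 0 < Real.Gamma b := Real.Gamma_pos_of_pos hb
    congr 1
    have h1 : Real.exp (-(r * x)) * Real.exp (-(t * x)) = Real.exp (-((r + t) * x)) := by
      rw [← Real.exp_add]; ring_nf
    have h2 : (r / (r + t)) ^ b * (r + t) ^ b = r ^ b := by
      rw [← Real.mul_rpow (by positivity) hrt.le, div_mul_cancel₀ _ hrt.ne']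
    calc r ^ b / Real.Gamma b * x ^ (b - 1) * Real.exp (-(r * x)) * Real.exp (-(t * x))
        = r ^ b / Real.Gamma b * x ^ (b - 1) * Real.exp (-((r + t) * x)) := by
          rw [mul_assoc, h1]
      _ = (r / (r + t)) ^ b * ((r + t) ^ b / Real.Gamma b * x ^ (b - 1)
            * Real.exp (-((r + t) * x))) := by rw [← h2]; ring
  · rw [gammaPDF_of_neg hx, gammaPDF_of_neg hx]; simp

lemma lintegral_exp_gamma {b r t : ℝ} (hb : 0 < b) (hr : 0 < r) (ht : 0 ≤ t) :
    ∫⁻ x, ENNReal.ofReal (Real.exp (-(t * x))) ∂(gammaMeasure b r)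
      = ENNReal.ofReal ((1 + t / r) ^ (-b)) := by
  have hrt : 0 < r + t := by linarith
  rw [gammaMeasure, lintegral_withDensity_eq_lintegral_mul _
      (show Measurable (gammaPDF b r) from (measurable_gammaPDFReal b r).ennreal_ofReal)
      (by fun_prop)]
  simp only [Pi.mul_apply]
  have : ∀ x, gammaPDF b r x * ENNReal.ofReal (Real.exp (-(t * x)))
      = ENNReal.ofReal ((r / (r + t)) ^ b) * gammaPDF b (r + t) x :=
    gammaPDF_mul_exp hb hr hrt
  simp_rw [this]
  rw [lintegral_const_mul _ (show Measurable (gammaPDF b (r + t)) from (measurable_gammaPDFReal b (r + t)).ennreal_ofReal),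
    lintegral_gammaPDF_eq_one hb hrt, mul_one]
  congr 1
  have h3 : 1 + t / r = (r + t) / r := by field_simp
  rw [h3, Real.rpow_neg (by positivity), ← Real.inv_rpow (by positivity), inv_div]

lemma lint_exp_Ioi {l : ℝ} (hl : 0 < l) (κ : ℝ) :
    (∫⁻ u in Ioi κ, ENNReal.ofReal (Real.exp (-(u * l))))
      = ENNReal.ofReal (Real.exp (-(κ * l)) / l) := by
  have hi : IntegrableOn (fun u : ℝ => Real.exp (-(l * u))) (Ioi κ) := by
    simpa [neg_mul] using exp_neg_integrableOn_Ioi κ hl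
  have hB : (∫ u in Ioi κ, Real.exp (-(l * u))) = Real.exp (-(κ * l)) / l := by
    have := integral_comp_mul_left_Ioi (fun x => Real.exp (-x)) κ hl
    simp only [smul_eq_mul] at this
    rw [this, integral_exp_neg_Ioi, mul_comm κ l]
    field_simp
  have hswap : ∀ u : ℝ, ENNReal.ofReal (Real.exp (-(u * l)))
      = ENNReal.ofReal (Real.exp (-(l * u))) := fun u => by rw [mul_comm]
  simp_rw [hswap]
  rw [← ofReal_integral_eq_lintegral_ofReal hi
      (ae_of_all _ fun u => (Real.exp_pos _).le), hB]

lemma lint_x_exp_Ioi {l : ℝ} (hl : 0 < l) :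
    (∫⁻ x in Ioi 0, ENNReal.ofReal (x * Real.exp (-(l * x))))
      = ENNReal.ofReal (1 / (l * l)) := by
  have h1 : (∫⁻ x, gammaPDF 2 l x) = 1 := lintegral_gammaPDF_eq_one two_pos hl
  have hsplit : (∫⁻ x, gammaPDF 2 l x)
      = ∫⁻ x in Ioi 0, gammaPDF 2 l x := by
    rw [← lintegral_add_compl (μ := volume) (gammaPDF 2 l) measurableSet_Ioi]
    have h0 : ∫⁻ x in (Ioi (0:ℝ))ᶜ, gammaPDF 2 l x = 0 := by
      rw [compl_Ioi]
      rw [setLIntegral_congr (Iio_ae_eq_Iic (a := (0:ℝ))).symm,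
        lintegral_gammaPDF_of_nonpos le_rfl]
    rw [h0, add_zero]
  have h2 : ∀ x ∈ Ioi (0:ℝ), gammaPDF 2 l x
      = ENNReal.ofReal (l * l) * ENNReal.ofReal (x * Real.exp (-(l * x))) := by
    intro x hx
    rw [gammaPDF_of_nonneg (le_of_lt hx), ← ENNReal.ofReal_mul (by positivity)]
    congr 1
    rw [Real.Gamma_two]
    have : x ^ ((2:ℝ) - 1) = x := by norm_num
    rw [this]
    have hl2 : l ^ (2:ℝ) = l * l := by
      rw [show (2:ℝ) = ((2:ℕ):ℝ) by norm_num, Real.rpow_natCast]; ring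
    rw [hl2]; ring
  rw [hsplit, setLIntegral_congr_fun_ae measurableSet_Ioi (ae_of_all _ h2),
    lintegral_const_mul _ (by fun_prop)] at h1
  have hll : (0:ℝ) < l * l := by positivity
  set c : ℝ≥0∞ := ENNReal.ofReal (l * l) with hc
  set X := ∫⁻ x in Ioi (0:ℝ), ENNReal.ofReal (x * Real.exp (-(l * x))) with hX
  have hne : c ≠ 0 := by simp [hc, ENNReal.ofReal_eq_zero, not_le, hll]
  have hnt : c ≠ ⊤ := ENNReal.ofReal_ne_top
  have : X = c⁻¹ := by
    calc X = c⁻¹ * c * X := by rw [ENNReal.inv_mul_cancel hne hnt, one_mul]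
      _ = c⁻¹ * (c * X) := by rw [mul_assoc]
      _ = c⁻¹ := by rw [h1, mul_one]
  rw [this, hc, ← ENNReal.ofReal_inv_of_pos hll, one_div]


lemma slice_prob (hβ : 0 < β) (hb₀ : 0 < b₀) (hb₀ₕ : 0 < b₀ₕ) (hbₕ : 0 < bₕ) :
    IsProbabilityMeasure (sliceMeasure b₀ b₀ₕ bₕ β) := by
  haveI := isProbabilityMeasure_gammaMeasure hb₀ hβ
  haveI := isProbabilityMeasure_gammaMeasure hb₀ₕ hβ
  haveI := isProbabilityMeasure_gammaMeasure hbₕ hβ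
  rw [sliceMeasure]; infer_instance

lemma slice_ae_pos (hβ : 0 < β) (hb₀ : 0 < b₀) (hb₀ₕ : 0 < b₀ₕ) (hbₕ : 0 < bₕ) :
    ∀ᵐ s : ℝ × ℝ × ℝ ∂(sliceMeasure b₀ b₀ₕ bₕ β), 0 < s.1 ∧ 0 < s.2.1 ∧ 0 < s.2.2 := by
  haveI := isProbabilityMeasure_gammaMeasure hb₀ hβ
  haveI := isProbabilityMeasure_gammaMeasure hb₀ₕ hβ
  haveI := isProbabilityMeasure_gammaMeasure hbₕ hβ
  rw [sliceMeasure]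
  have m1 : MeasurableSet {s : ℝ × ℝ × ℝ | 0 < s.1} :=
    measurable_fst measurableSet_Ioi
  have m2 : MeasurableSet {s : ℝ × ℝ × ℝ | 0 < s.2.1} :=
    (measurable_fst.comp measurable_snd) measurableSet_Ioi
  have m3 : MeasurableSet {s : ℝ × ℝ × ℝ | 0 < s.2.2} :=
    (measurable_snd.comp measurable_snd) measurableSet_Ioi
  have mp1 : MeasurableSet {p : ℝ × ℝ | 0 < p.1} := measurable_fst measurableSet_Ioi
  have mp2 : MeasurableSet {p : ℝ × ℝ | 0 < p.2} := measurable_snd measurableSet_Ioi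
  have h1 : ∀ᵐ s : ℝ × ℝ × ℝ
      ∂(gammaMeasure b₀ β).prod ((gammaMeasure b₀ₕ β).prod (gammaMeasure bₕ β)), 0 < s.1 := by
    rw [Measure.ae_prod_iff_ae_ae m1]
    filter_upwards [gamma_ae_pos hb₀ hβ] with x hx using ae_of_all _ fun _ => hx
  have h2 : ∀ᵐ s : ℝ × ℝ × ℝ
      ∂(gammaMeasure b₀ β).prod ((gammaMeasure b₀ₕ β).prod (gammaMeasure bₕ β)), 0 < s.2.1 := by
    rw [Measure.ae_prod_iff_ae_ae m2]
    refine ae_of_all _ fun x => ?_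
    rw [Measure.ae_prod_iff_ae_ae mp1]
    filter_upwards [gamma_ae_pos hb₀ₕ hβ] with y hy using ae_of_all _ fun _ => hy
  have h3 : ∀ᵐ s : ℝ × ℝ × ℝ
      ∂(gammaMeasure b₀ β).prod ((gammaMeasure b₀ₕ β).prod (gammaMeasure bₕ β)), 0 < s.2.2 := by
    rw [Measure.ae_prod_iff_ae_ae m3]
    refine ae_of_all _ fun x => ?_
    rw [Measure.ae_prod_iff_ae_ae mp2]
    refine ae_of_all _ fun y => ?_
    filter_upwards [gamma_ae_pos hbₕ hβ] with z hz using hz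
  exact h1.and (h2.and h3)

lemma slice_laplace (hβ : 0 < β) (hb₀ : 0 < b₀) (hb₀ₕ : 0 < b₀ₕ) (hbₕ : 0 < bₕ)
    {u v : ℝ} (hu : 0 ≤ u) (hv : 0 ≤ v) :
    ∫⁻ s : ℝ × ℝ × ℝ, ENNReal.ofReal
        (Real.exp (-(u * (s.1 + s.2.1)) - v * (s.2.1 + s.2.2)))
        ∂(sliceMeasure b₀ b₀ₕ bₕ β)
      = ENNReal.ofReal ((1 + u / β) ^ (-b₀) * (1 + (u + v) / β) ^ (-b₀ₕ)
          * (1 + v / β) ^ (-bₕ)) := by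
  haveI := isProbabilityMeasure_gammaMeasure hb₀ hβ
  haveI := isProbabilityMeasure_gammaMeasure hb₀ₕ hβ
  haveI := isProbabilityMeasure_gammaMeasure hbₕ hβ
  have hsplit : ∀ s : ℝ × ℝ × ℝ,
      ENNReal.ofReal (Real.exp (-(u * (s.1 + s.2.1)) - v * (s.2.1 + s.2.2)))
        = ENNReal.ofReal (Real.exp (-(u * s.1))) *
          (ENNReal.ofReal (Real.exp (-((u + v) * s.2.1)))
            * ENNReal.ofReal (Real.exp (-(v * s.2.2)))) := by
    intro s
    rw [← ENNReal.ofReal_mul (Real.exp_pos _).le, ← ENNReal.ofReal_mul (Real.exp_pos _).le,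
      ← Real.exp_add, ← Real.exp_add]
    congr 1
    ring
  simp_rw [hsplit]
  rw [sliceMeasure,
    lintegral_prod_mul (f := fun x => ENNReal.ofReal (Real.exp (-(u * x))))
      (g := fun y : ℝ × ℝ => ENNReal.ofReal (Real.exp (-((u + v) * y.1)))
        * ENNReal.ofReal (Real.exp (-(v * y.2)))) (by fun_prop) (by fun_prop),
    lintegral_prod_mul (f := fun y => ENNReal.ofReal (Real.exp (-((u + v) * y))))
      (g := fun z => ENNReal.ofReal (Real.exp (-(v * z)))) (by fun_prop) (by fun_prop),
    lintegral_exp_gamma hb₀ hβ hu, lintegral_exp_gamma hb₀ₕ hβ (by linarith),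
    lintegral_exp_gamma hbₕ hβ hv,
    ← ENNReal.ofReal_mul (by positivity), ← ENNReal.ofReal_mul (by positivity), mul_assoc]


lemma A_eq_R (hβ : 0 < β) (hb₀ : 0 < b₀) (hb₀ₕ : 0 < b₀ₕ) (hbₕ : 0 < bₕ) (hκ : 0 < κ) :
    (∫⁻ s : ℝ × ℝ × ℝ, ENNReal.ofReal
        (Real.exp (-κ * ((s.1 + s.2.1) + (s.2.1 + s.2.2)))
          / ((s.1 + s.2.1) * (s.2.1 + s.2.2)))
        ∂(sliceMeasure b₀ b₀ₕ bₕ β))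
      = ∫⁻ u₀ in Ioi κ, ∫⁻ uₕ in Ioi κ, ENNReal.ofReal
          ((1 + u₀ / β) ^ (-b₀) * (1 + (u₀ + uₕ) / β) ^ (-b₀ₕ) * (1 + uₕ / β) ^ (-bₕ)) := by
  haveI := slice_prob hβ hb₀ hb₀ₕ hbₕ
  have step1 : ∀ᵐ s : ℝ × ℝ × ℝ ∂(sliceMeasure b₀ b₀ₕ bₕ β),
      ENNReal.ofReal (Real.exp (-κ * ((s.1 + s.2.1) + (s.2.1 + s.2.2)))
          / ((s.1 + s.2.1) * (s.2.1 + s.2.2)))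
        = ∫⁻ u₀ in Ioi κ, ∫⁻ uₕ in Ioi κ, ENNReal.ofReal
            (Real.exp (-(u₀ * (s.1 + s.2.1)) - uₕ * (s.2.1 + s.2.2))) := by
    filter_upwards [slice_ae_pos hβ hb₀ hb₀ₕ hbₕ] with s hs
    obtain ⟨h1, h2, h3⟩ := hs
    have ha : 0 < s.1 + s.2.1 := add_pos h1 h2
    have hc : 0 < s.2.1 + s.2.2 := add_pos h2 h3
    have inner : ∀ u₀ : ℝ,
        (∫⁻ uₕ in Ioi κ, ENNReal.ofReal
          (Real.exp (-(u₀ * (s.1 + s.2.1)) - uₕ * (s.2.1 + s.2.2))))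
        = ENNReal.ofReal (Real.exp (-(u₀ * (s.1 + s.2.1))))
            * ENNReal.ofReal (Real.exp (-(κ * (s.2.1 + s.2.2))) / (s.2.1 + s.2.2)) := by
      intro u₀
      have hsp : ∀ uₕ : ℝ, ENNReal.ofReal
          (Real.exp (-(u₀ * (s.1 + s.2.1)) - uₕ * (s.2.1 + s.2.2)))
          = ENNReal.ofReal (Real.exp (-(u₀ * (s.1 + s.2.1))))
            * ENNReal.ofReal (Real.exp (-(uₕ * (s.2.1 + s.2.2)))) := by
        intro uₕ
        rw [← ENNReal.ofReal_mul (Real.exp_pos _).le, ← Real.exp_add]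
        congr 2 <;> ring
      simp_rw [hsp]
      rw [lintegral_const_mul' _ _ ENNReal.ofReal_ne_top, lint_exp_Ioi hc κ]
    simp_rw [inner]
    rw [lintegral_mul_const' _ _ ENNReal.ofReal_ne_top, lint_exp_Ioi ha κ,
      ← ENNReal.ofReal_mul (by positivity)]
    congr 1
    rw [div_mul_div_comm, ← Real.exp_add]
    congr 2 <;> ring
  rw [lintegral_congr_ae step1]
  have hmeas0 : Measurable fun p : ((ℝ × ℝ × ℝ) × ℝ) × ℝ => ENNReal.ofReal
      (Real.exp (-(p.1.2 * (p.1.1.1 + p.1.1.2.1)) - p.2 * (p.1.1.2.1 + p.1.1.2.2))) := by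
    fun_prop
  have hmeas1 : Measurable fun p : (ℝ × ℝ × ℝ) × ℝ =>
      ∫⁻ uₕ in Ioi κ, ENNReal.ofReal
        (Real.exp (-(p.2 * (p.1.1 + p.1.2.1)) - uₕ * (p.1.2.1 + p.1.2.2))) :=
    Measurable.lintegral_prod_right' hmeas0
  rw [lintegral_lintegral_swap hmeas1.aemeasurable]
  refine lintegral_congr_ae ?_
  filter_upwards [ae_restrict_mem (measurableSet_Ioi (a := κ))] with u₀ hu₀
  have hmeas2 : Measurable fun p : (ℝ × ℝ × ℝ) × ℝ => ENNReal.ofReal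
      (Real.exp (-(u₀ * (p.1.1 + p.1.2.1)) - p.2 * (p.1.2.1 + p.1.2.2))) := by
    fun_prop
  rw [lintegral_lintegral_swap hmeas2.aemeasurable]
  refine lintegral_congr_ae ?_
  filter_upwards [ae_restrict_mem (measurableSet_Ioi (a := κ))] with uₕ huₕ
  rw [slice_laplace hβ hb₀ hb₀ₕ hbₕ (le_of_lt (lt_trans hκ hu₀)) (le_of_lt (lt_trans hκ huₕ))]


lemma K_eq (hβ : 0 < β) (hb₀ : 0 < b₀) (hb₀ₕ : 0 < b₀ₕ) (hbₕ : 0 < bₕ) (hκ : 0 < κ)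
    {x₀ : ℝ} (hx₀ : 0 < x₀) :
    (∫⁻ xₕ in Ioi (0:ℝ), ∫⁻ s : ℝ × ℝ × ℝ, ENNReal.ofReal
        (x₀ * xₕ * ((s.1 + s.2.1) * (s.2.1 + s.2.2) *
          Real.exp (-(s.1 + s.2.1) * (κ + x₀) - (s.2.1 + s.2.2) * (κ + xₕ))))
        ∂(sliceMeasure b₀ b₀ₕ bₕ β))
      = ∫⁻ s : ℝ × ℝ × ℝ, ENNReal.ofReal
          (x₀ * ((s.1 + s.2.1) * Real.exp (-((κ + x₀) * (s.1 + s.2.1))))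
            * (Real.exp (-(κ * (s.2.1 + s.2.2))) / (s.2.1 + s.2.2)))
          ∂(sliceMeasure b₀ b₀ₕ bₕ β) := by
  haveI := slice_prob hβ hb₀ hb₀ₕ hbₕ
  have hmeas : Measurable fun p : ℝ × (ℝ × ℝ × ℝ) => ENNReal.ofReal
      (x₀ * p.1 * ((p.2.1 + p.2.2.1) * (p.2.2.1 + p.2.2.2) *
        Real.exp (-(p.2.1 + p.2.2.1) * (κ + x₀) - (p.2.2.1 + p.2.2.2) * (κ + p.1)))) := by
    fun_prop
  rw [lintegral_lintegral_swap hmeas.aemeasurable]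
  refine lintegral_congr_ae ?_
  filter_upwards [slice_ae_pos hβ hb₀ hb₀ₕ hbₕ] with s hs
  obtain ⟨h1, h2, h3⟩ := hs
  set a := s.1 + s.2.1 with hadef
  set c := s.2.1 + s.2.2 with hcdef
  have ha : 0 < a := add_pos h1 h2
  have hc : 0 < c := add_pos h2 h3
  have hC : 0 ≤ x₀ * (a * Real.exp (-((κ + x₀) * a))) * (c * Real.exp (-(κ * c))) := by
    positivity
  have hpt : ∀ xₕ : ℝ, ENNReal.ofReal (x₀ * xₕ * (a * c *
        Real.exp (-a * (κ + x₀) - c * (κ + xₕ))))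
      = ENNReal.ofReal (x₀ * (a * Real.exp (-((κ + x₀) * a))) * (c * Real.exp (-(κ * c))))
        * ENNReal.ofReal (xₕ * Real.exp (-(c * xₕ))) := by
    intro xₕ
    rw [← ENNReal.ofReal_mul hC]
    congr 1
    have hexp : Real.exp (-a * (κ + x₀) - c * (κ + xₕ))
        = Real.exp (-((κ + x₀) * a)) * (Real.exp (-(κ * c)) * Real.exp (-(c * xₕ))) := by
      rw [← Real.exp_add, ← Real.exp_add]
      congr 1
      ring
    rw [hexp]
    ring
  simp_rw [hpt]
  rw [lintegral_const_mul' _ _ ENNReal.ofReal_ne_top, lint_x_exp_Ioi hc,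
    ← ENNReal.ofReal_mul hC]
  congr 1
  field_simp

lemma T_eq_A (hβ : 0 < β) (hb₀ : 0 < b₀) (hb₀ₕ : 0 < b₀ₕ) (hbₕ : 0 < bₕ) (hκ : 0 < κ) :
    (∫⁻ x₀ in Ioi (0:ℝ), ∫⁻ s : ℝ × ℝ × ℝ, ENNReal.ofReal
        (x₀ * ((s.1 + s.2.1) * Real.exp (-((κ + x₀) * (s.1 + s.2.1))))
          * (Real.exp (-(κ * (s.2.1 + s.2.2))) / (s.2.1 + s.2.2)))
        ∂(sliceMeasure b₀ b₀ₕ bₕ β))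
      = ∫⁻ s : ℝ × ℝ × ℝ, ENNReal.ofReal
          (Real.exp (-κ * ((s.1 + s.2.1) + (s.2.1 + s.2.2)))
            / ((s.1 + s.2.1) * (s.2.1 + s.2.2))) ∂(sliceMeasure b₀ b₀ₕ bₕ β) := by
  haveI := slice_prob hβ hb₀ hb₀ₕ hbₕ
  have hmeas : Measurable fun p : ℝ × (ℝ × ℝ × ℝ) => ENNReal.ofReal
      (p.1 * ((p.2.1 + p.2.2.1) * Real.exp (-((κ + p.1) * (p.2.1 + p.2.2.1))))
        * (Real.exp (-(κ * (p.2.2.1 + p.2.2.2))) / (p.2.2.1 + p.2.2.2))) := by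
    fun_prop
  rw [lintegral_lintegral_swap hmeas.aemeasurable]
  refine lintegral_congr_ae ?_
  filter_upwards [slice_ae_pos hβ hb₀ hb₀ₕ hbₕ] with s hs
  obtain ⟨h1, h2, h3⟩ := hs
  set a := s.1 + s.2.1 with hadef
  set c := s.2.1 + s.2.2 with hcdef
  have ha : 0 < a := add_pos h1 h2
  have hc : 0 < c := add_pos h2 h3
  have hD : 0 ≤ a * Real.exp (-(κ * a)) * (Real.exp (-(κ * c)) / c) := by positivity
  have hpt : ∀ x₀ : ℝ, ENNReal.ofReal (x₀ * (a * Real.exp (-((κ + x₀) * a)))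
        * (Real.exp (-(κ * c)) / c))
      = ENNReal.ofReal (a * Real.exp (-(κ * a)) * (Real.exp (-(κ * c)) / c))
        * ENNReal.ofReal (x₀ * Real.exp (-(a * x₀))) := by
    intro x₀
    rw [← ENNReal.ofReal_mul hD]
    congr 1
    have hexp : Real.exp (-((κ + x₀) * a))
        = Real.exp (-(κ * a)) * Real.exp (-(a * x₀)) := by
      rw [← Real.exp_add]
      congr 1
      ring
    rw [hexp]
    ring
  simp_rw [hpt]
  rw [lintegral_const_mul' _ _ ENNReal.ofReal_ne_top, lint_x_exp_Ioi ha,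
    ← ENNReal.ofReal_mul hD]
  congr 1
  have hexp2 : Real.exp (-κ * (a + c)) = Real.exp (-(κ * a)) * Real.exp (-(κ * c)) := by
    rw [← Real.exp_add]
    congr 1
    ring
  rw [hexp2]
  field_simp


noncomputable def W (β b₀ b₀ₕ bₕ u₀ uₕ : ℝ) : ℝ :=
  (1 + u₀ / β) ^ (-b₀) * (1 + (u₀ + uₕ) / β) ^ (-b₀ₕ) * (1 + uₕ / β) ^ (-bₕ)

noncomputable def Ifun (β b₀ b₀ₕ bₕ κ : ℝ) (u₀ : ℝ) : ℝ≥0∞ :=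
  ∫⁻ uₕ in Ioi κ, ENNReal.ofReal (W β b₀ b₀ₕ bₕ u₀ uₕ)

variable {β b₀ b₀ₕ bₕ κ : ℝ}

lemma rpow_neg_anti {x y b : ℝ} (hx : 0 < x) (hxy : x ≤ y) (hb : 0 ≤ b) :
    y ^ (-b) ≤ x ^ (-b) := by
  rw [Real.rpow_neg (le_trans hx.le hxy), Real.rpow_neg hx.le]
  exact inv_anti₀ (Real.rpow_pos_of_pos hx b) (Real.rpow_le_rpow hx.le hxy hb)

lemma W_nonneg (hβ : 0 < β) {u₀ uₕ : ℝ} (hu₀ : 0 < u₀) (huₕ : 0 < uₕ) :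
    0 ≤ W β b₀ b₀ₕ bₕ u₀ uₕ := by
  unfold W
  have h1 : (0:ℝ) ≤ 1 + u₀ / β := by positivity
  have h2 : (0:ℝ) ≤ 1 + (u₀ + uₕ) / β := by positivity
  have h3 : (0:ℝ) ≤ 1 + uₕ / β := by positivity
  exact mul_nonneg (mul_nonneg (Real.rpow_nonneg h1 _) (Real.rpow_nonneg h2 _))
    (Real.rpow_nonneg h3 _)

lemma W_meas : Measurable fun p : ℝ × ℝ => ENNReal.ofReal (W β b₀ b₀ₕ bₕ p.1 p.2) := by
  unfold W; fun_prop

lemma Ifun_meas : Measurable (Ifun β b₀ b₀ₕ bₕ κ) := by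
  unfold Ifun
  exact Measurable.lintegral_prod_right' (W_meas (β := β))

lemma W_key_ub (hβ : 0 < β) (hb₀ : 0 < b₀) (hb₀ₕ : 0 < b₀ₕ) (hbₕ : 0 < bₕ) (hκ : 0 < κ)
    {u₀ uₕ : ℝ} (hu₀ : κ < u₀) (huₕ : κ < uₕ) :
    W β b₀ b₀ₕ bₕ u₀ uₕ ≤ (1 + κ / β) ^ b₀ * W β b₀ b₀ₕ bₕ κ uₕ := by
  have hu₀' : 0 < u₀ := hκ.trans hu₀
  have huₕ' : 0 < uₕ := hκ.trans huₕ
  have hp' : (0:ℝ) < 1 + κ / β := by positivity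
  have hq' : (0:ℝ) < 1 + (κ + uₕ) / β := by positivity
  have hq : (0:ℝ) < 1 + (u₀ + uₕ) / β := by positivity
  have hr : (0:ℝ) ≤ (1 + uₕ / β) ^ (-bₕ) := Real.rpow_nonneg (by positivity) _
  have hcan : (1 + κ / β) ^ b₀ * (1 + κ / β) ^ (-b₀) = 1 := by
    rw [← Real.rpow_add hp']; simp
  have h1 : (1 + u₀ / β) ^ (-b₀) ≤ 1 := by
    refine Real.rpow_le_one_of_one_le_of_nonpos ?_ (by linarith)
    have : (0:ℝ) ≤ u₀ / β := by positivity
    linarith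
  have h2 : (1 + (u₀ + uₕ) / β) ^ (-b₀ₕ) ≤ (1 + (κ + uₕ) / β) ^ (-b₀ₕ) := by
    refine rpow_neg_anti hq' ?_ hb₀ₕ.le
    have : (κ + uₕ) / β ≤ (u₀ + uₕ) / β := by gcongr <;> linarith
    linarith
  unfold W
  calc (1 + u₀ / β) ^ (-b₀) * (1 + (u₀ + uₕ) / β) ^ (-b₀ₕ) * (1 + uₕ / β) ^ (-bₕ)
      ≤ 1 * (1 + (κ + uₕ) / β) ^ (-b₀ₕ) * (1 + uₕ / β) ^ (-bₕ) := by
        refine mul_le_mul_of_nonneg_right ?_ hr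
        exact mul_le_mul h1 h2 (Real.rpow_nonneg hq.le _) zero_le_one
    _ = ((1 + κ / β) ^ b₀ * (1 + κ / β) ^ (-b₀))
          * ((1 + (κ + uₕ) / β) ^ (-b₀ₕ) * (1 + uₕ / β) ^ (-bₕ)) := by rw [hcan]; ring
    _ = (1 + κ / β) ^ b₀ * ((1 + κ / β) ^ (-b₀) * (1 + (κ + uₕ) / β) ^ (-b₀ₕ)
          * (1 + uₕ / β) ^ (-bₕ)) := by ring

lemma W_key_lb (hβ : 0 < β) (hb₀ : 0 < b₀) (hb₀ₕ : 0 < b₀ₕ) (hbₕ : 0 < bₕ) (hκ : 0 < κ)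
    {u₀ uₕ : ℝ} (hu₀ : κ < u₀) (huₕ : κ < uₕ) :
    (1 + u₀ / β) ^ (-b₀) * ((1 + (u₀ - κ) / β) ^ (-b₀ₕ) * (1 + κ / β) ^ b₀)
        * W β b₀ b₀ₕ bₕ κ uₕ
      ≤ W β b₀ b₀ₕ bₕ u₀ uₕ := by
  have hu₀' : 0 < u₀ := hκ.trans hu₀
  have huₕ' : 0 < uₕ := hκ.trans huₕ
  have hp : (0:ℝ) < 1 + u₀ / β := by positivity
  have hp' : (0:ℝ) < 1 + κ / β := by positivity
  have hq' : (0:ℝ) < 1 + (κ + uₕ) / β := by positivity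
  have hq : (0:ℝ) < 1 + (u₀ + uₕ) / β := by positivity
  have hd : (0:ℝ) < 1 + (u₀ - κ) / β := by
    have h4 : (0:ℝ) ≤ (u₀ - κ) / β := div_nonneg (by linarith) hβ.le
    linarith
  have hr : (0:ℝ) ≤ (1 + uₕ / β) ^ (-bₕ) := Real.rpow_nonneg (by positivity) _
  have hcan : (1 + κ / β) ^ b₀ * (1 + κ / β) ^ (-b₀) = 1 := by
    rw [← Real.rpow_add hp']; simp
  have hbase : 1 + (u₀ + uₕ) / β ≤ (1 + (u₀ - κ) / β) * (1 + (κ + uₕ) / β) := by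
    have e1 : (1 + (u₀ - κ) / β) * (1 + (κ + uₕ) / β)
        = 1 + (u₀ + uₕ) / β + (u₀ - κ) * (κ + uₕ) / (β * β) := by
      field_simp
      ring
    have e2 : (0:ℝ) ≤ (u₀ - κ) * (κ + uₕ) / (β * β) :=
      div_nonneg (mul_nonneg (by linarith) (by linarith)) (by positivity)
    linarith
  have h2 : (1 + (u₀ - κ) / β) ^ (-b₀ₕ) * (1 + (κ + uₕ) / β) ^ (-b₀ₕ)
      ≤ (1 + (u₀ + uₕ) / β) ^ (-b₀ₕ) := by
    rw [← Real.mul_rpow hd.le hq'.le]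
    exact rpow_neg_anti hq hbase hb₀ₕ.le
  unfold W
  calc (1 + u₀ / β) ^ (-b₀) * ((1 + (u₀ - κ) / β) ^ (-b₀ₕ) * (1 + κ / β) ^ b₀)
        * ((1 + κ / β) ^ (-b₀) * (1 + (κ + uₕ) / β) ^ (-b₀ₕ) * (1 + uₕ / β) ^ (-bₕ))
      = (1 + u₀ / β) ^ (-b₀)
          * ((1 + (u₀ - κ) / β) ^ (-b₀ₕ) * (1 + (κ + uₕ) / β) ^ (-b₀ₕ))
          * (1 + uₕ / β) ^ (-bₕ)
          * ((1 + κ / β) ^ b₀ * (1 + κ / β) ^ (-b₀)) := by ring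
    _ = (1 + u₀ / β) ^ (-b₀)
          * ((1 + (u₀ - κ) / β) ^ (-b₀ₕ) * (1 + (κ + uₕ) / β) ^ (-b₀ₕ))
          * (1 + uₕ / β) ^ (-bₕ) := by rw [hcan, mul_one]
    _ ≤ (1 + u₀ / β) ^ (-b₀) * (1 + (u₀ + uₕ) / β) ^ (-b₀ₕ) * (1 + uₕ / β) ^ (-bₕ) := by
        refine mul_le_mul_of_nonneg_right ?_ hr
        exact mul_le_mul_of_nonneg_left h2 (Real.rpow_nonneg hp.le _)

lemma Ifun_ub (hβ : 0 < β) (hb₀ : 0 < b₀) (hb₀ₕ : 0 < b₀ₕ) (hbₕ : 0 < bₕ) (hκ : 0 < κ)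
    {u₀ : ℝ} (hu₀ : κ < u₀) :
    Ifun β b₀ b₀ₕ bₕ κ u₀ ≤ ENNReal.ofReal ((1 + κ / β) ^ b₀) * Ifun β b₀ b₀ₕ bₕ κ κ := by
  have hc : (0:ℝ) ≤ (1 + κ / β) ^ b₀ := Real.rpow_nonneg (by positivity) _
  unfold Ifun
  rw [← lintegral_const_mul' _ _ ENNReal.ofReal_ne_top]
  refine lintegral_mono_ae ?_
  filter_upwards [ae_restrict_mem (measurableSet_Ioi (a := κ))] with uₕ huₕ
  rw [← ENNReal.ofReal_mul hc]
  exact ENNReal.ofReal_le_ofReal (W_key_ub hβ hb₀ hb₀ₕ hbₕ hκ hu₀ huₕ)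

lemma Ifun_lb (hβ : 0 < β) (hb₀ : 0 < b₀) (hb₀ₕ : 0 < b₀ₕ) (hbₕ : 0 < bₕ) (hκ : 0 < κ)
    {u₀ : ℝ} (hu₀ : κ < u₀) :
    ENNReal.ofReal ((1 + u₀ / β) ^ (-b₀) * ((1 + (u₀ - κ) / β) ^ (-b₀ₕ) * (1 + κ / β) ^ b₀))
        * Ifun β b₀ b₀ₕ bₕ κ κ ≤ Ifun β b₀ b₀ₕ bₕ κ u₀ := by
  have hc : (0:ℝ) ≤ (1 + u₀ / β) ^ (-b₀) * ((1 + (u₀ - κ) / β) ^ (-b₀ₕ) * (1 + κ / β) ^ b₀) := by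
    have h1 : (0:ℝ) < 1 + u₀ / β := by have := hκ.trans hu₀; positivity
    have h2 : (0:ℝ) < 1 + (u₀ - κ) / β := by
      have h4 : (0:ℝ) ≤ (u₀ - κ) / β := div_nonneg (by linarith) hβ.le
      linarith
    have h3 : (0:ℝ) < 1 + κ / β := by positivity
    positivity
  unfold Ifun
  rw [← lintegral_const_mul' _ _ ENNReal.ofReal_ne_top]
  refine lintegral_mono_ae ?_
  filter_upwards [ae_restrict_mem (measurableSet_Ioi (a := κ))] with uₕ huₕ
  rw [← ENNReal.ofReal_mul hc]
  exact ENNReal.ofReal_le_ofReal (W_key_lb hβ hb₀ hb₀ₕ hbₕ hκ hu₀ huₕ)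

lemma RHS_eq (hβ : 0 < β) (hb₀ : 0 < b₀) (hb₀ₕ : 0 < b₀ₕ) (hbₕ : 0 < bₕ) (hκ : 0 < κ) :
    (∫ u₀ in Ioi κ, ∫ uₕ in Ioi κ, W β b₀ b₀ₕ bₕ u₀ uₕ)
      = (∫⁻ u₀ in Ioi κ, Ifun β b₀ b₀ₕ bₕ κ u₀).toReal := by
  have hstepa : ∀ u₀ ∈ Ioi κ, (∫ uₕ in Ioi κ, W β b₀ b₀ₕ bₕ u₀ uₕ)
      = (Ifun β b₀ b₀ₕ bₕ κ u₀).toReal := by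
    intro u₀ hu₀
    rw [integral_eq_lintegral_of_nonneg_ae ?_ ?_]
    · rfl
    · filter_upwards [ae_restrict_mem (measurableSet_Ioi (a := κ))] with uₕ huₕ
      exact W_nonneg hβ (hκ.trans hu₀) (hκ.trans huₕ)
    · exact (by unfold W; fun_prop : Measurable fun uₕ => W β b₀ b₀ₕ bₕ u₀ uₕ)
        |>.aestronglyMeasurable
  rw [setIntegral_congr_fun measurableSet_Ioi hstepa]
  by_cases htop : Ifun β b₀ b₀ₕ bₕ κ κ = ⊤
  · -- everything infinite
    have hall : ∀ u₀ ∈ Ioi κ, Ifun β b₀ b₀ₕ bₕ κ u₀ = ⊤ := by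
      intro u₀ hu₀
      refine top_le_iff.mp (le_trans (le_of_eq ?_) (Ifun_lb hβ hb₀ hb₀ₕ hbₕ hκ hu₀))
      rw [htop, ENNReal.mul_top]
      refine (ENNReal.ofReal_pos.mpr ?_).ne'
      have h1 : (0:ℝ) < 1 + u₀ / β := by have := hκ.trans hu₀; positivity
      have h2 : (0:ℝ) < 1 + (u₀ - κ) / β := by
        have h4 : (0:ℝ) ≤ (u₀ - κ) / β := div_nonneg (by linarith [mem_Ioi.mp hu₀]) hβ.le
        linarith
      have h3 : (0:ℝ) < 1 + κ / β := by positivity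
      positivity
    have hL : (∫ u₀ in Ioi κ, (Ifun β b₀ b₀ₕ bₕ κ u₀).toReal) = 0 := by
      rw [setIntegral_congr_fun measurableSet_Ioi
        (fun u₀ hu₀ => by rw [hall u₀ hu₀, ENNReal.toReal_top] : EqOn _ (fun _ => (0:ℝ)) _)]
      simp
    have hR : (∫⁻ u₀ in Ioi κ, Ifun β b₀ b₀ₕ bₕ κ u₀) = ⊤ := by
      rw [setLIntegral_congr_fun_ae measurableSet_Ioi (ae_of_all _ hall), setLIntegral_const,
        Real.volume_Ioi, ENNReal.top_mul_top]
    rw [hL, hR, ENNReal.toReal_top]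
  · have hall : ∀ u₀ ∈ Ioi κ, Ifun β b₀ b₀ₕ bₕ κ u₀ ≠ ⊤ := by
      intro u₀ hu₀
      exact ne_top_of_le_ne_top
        (ENNReal.mul_lt_top ENNReal.ofReal_lt_top (lt_top_iff_ne_top.mpr htop)).ne
        (Ifun_ub hβ hb₀ hb₀ₕ hbₕ hκ hu₀)
    rw [integral_eq_lintegral_of_nonneg_ae
      (ae_of_all _ fun u₀ => ENNReal.toReal_nonneg)
      ((Ifun_meas (β := β)).ennreal_toReal.aestronglyMeasurable)]
    congr 1
    refine lintegral_congr_ae ?_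
    filter_upwards [ae_restrict_mem (measurableSet_Ioi (a := κ))] with u₀ hu₀
    exact ENNReal.ofReal_toReal (hall u₀ hu₀)


noncomputable def Kfun (β b₀ b₀ₕ bₕ κ x₀ : ℝ) : ℝ≥0∞ :=
  ∫⁻ s : ℝ × ℝ × ℝ, ENNReal.ofReal
    (x₀ * ((s.1 + s.2.1) * Real.exp (-((κ + x₀) * (s.1 + s.2.1))))
      * (Real.exp (-(κ * (s.2.1 + s.2.2))) / (s.2.1 + s.2.2))) ∂(sliceMeasure b₀ b₀ₕ bₕ β)

noncomputable def Aaux (β b₀ b₀ₕ bₕ κ : ℝ) : ℝ≥0∞ :=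
  ∫⁻ s : ℝ × ℝ × ℝ, ENNReal.ofReal
    (Real.exp (-(κ * (s.2.1 + s.2.2))) / (s.2.1 + s.2.2)) ∂(sliceMeasure b₀ b₀ₕ bₕ β)

lemma Kfun_meas (hβ : 0 < β) (hb₀ : 0 < b₀) (hb₀ₕ : 0 < b₀ₕ) (hbₕ : 0 < bₕ) :
    Measurable (Kfun β b₀ b₀ₕ bₕ κ) := by
  haveI := slice_prob hβ hb₀ hb₀ₕ hbₕ
  unfold Kfun
  apply Measurable.lintegral_prod_right' (f := fun p : ℝ × (ℝ × ℝ × ℝ) => ENNReal.ofReal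
    (p.1 * ((p.2.1 + p.2.2.1) * Real.exp (-((κ + p.1) * (p.2.1 + p.2.2.1))))
      * (Real.exp (-(κ * (p.2.2.1 + p.2.2.2))) / (p.2.2.1 + p.2.2.2))))
  fun_prop

lemma E_eq (hβ : 0 < β) (hb₀ : 0 < b₀) (hb₀ₕ : 0 < b₀ₕ) (hbₕ : 0 < bₕ) (hκ : 0 < κ)
    {x₀ xₕ : ℝ} (hx₀ : 0 < x₀) (hxₕ : 0 < xₕ) :
    ENNReal.ofReal (x₀ * xₕ * ∫ s : ℝ × ℝ × ℝ, (s.1 + s.2.1) * (s.2.1 + s.2.2) *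
        Real.exp (-(s.1 + s.2.1) * (κ + x₀) - (s.2.1 + s.2.2) * (κ + xₕ))
        ∂(sliceMeasure b₀ b₀ₕ bₕ β))
      = ∫⁻ s : ℝ × ℝ × ℝ, ENNReal.ofReal (x₀ * xₕ * ((s.1 + s.2.1) * (s.2.1 + s.2.2) *
          Real.exp (-(s.1 + s.2.1) * (κ + x₀) - (s.2.1 + s.2.2) * (κ + xₕ))))
          ∂(sliceMeasure b₀ b₀ₕ bₕ β) := by
  haveI := slice_prob hβ hb₀ hb₀ₕ hbₕ
  have hcx₀ : (0:ℝ) < κ + x₀ := by linarith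
  have hcxₕ : (0:ℝ) < κ + xₕ := by linarith
  have hmg : Measurable fun s : ℝ × ℝ × ℝ => (s.1 + s.2.1) * (s.2.1 + s.2.2) *
      Real.exp (-(s.1 + s.2.1) * (κ + x₀) - (s.2.1 + s.2.2) * (κ + xₕ)) := by fun_prop
  have hgnn : 0 ≤ᵐ[sliceMeasure b₀ b₀ₕ bₕ β] fun s : ℝ × ℝ × ℝ =>
      (s.1 + s.2.1) * (s.2.1 + s.2.2) *
      Real.exp (-(s.1 + s.2.1) * (κ + x₀) - (s.2.1 + s.2.2) * (κ + xₕ)) := by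
    filter_upwards [slice_ae_pos hβ hb₀ hb₀ₕ hbₕ] with s hs
    obtain ⟨h1, h2, h3⟩ := hs
    have ha : 0 < s.1 + s.2.1 := add_pos h1 h2
    have hc : 0 < s.2.1 + s.2.2 := add_pos h2 h3
    positivity
  have hint : Integrable (fun s : ℝ × ℝ × ℝ => (s.1 + s.2.1) * (s.2.1 + s.2.2) *
      Real.exp (-(s.1 + s.2.1) * (κ + x₀) - (s.2.1 + s.2.2) * (κ + xₕ)))
      (sliceMeasure b₀ b₀ₕ bₕ β) := by
    refine Integrable.mono' (integrable_const ((κ + x₀)⁻¹ * (κ + xₕ)⁻¹))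
      hmg.aestronglyMeasurable ?_
    filter_upwards [slice_ae_pos hβ hb₀ hb₀ₕ hbₕ] with s hs
    obtain ⟨h1, h2, h3⟩ := hs
    have ha : 0 < s.1 + s.2.1 := add_pos h1 h2
    have hc : 0 < s.2.1 + s.2.2 := add_pos h2 h3
    rw [Real.norm_eq_abs, abs_of_nonneg (by positivity)]
    have hsplit : Real.exp (-(s.1 + s.2.1) * (κ + x₀) - (s.2.1 + s.2.2) * (κ + xₕ))
        = Real.exp (-((s.1 + s.2.1) * (κ + x₀))) * Real.exp (-((s.2.1 + s.2.2) * (κ + xₕ))) := by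
      rw [← Real.exp_add]; congr 1; ring
    have hb1 : (s.1 + s.2.1) * Real.exp (-((s.1 + s.2.1) * (κ + x₀))) ≤ (κ + x₀)⁻¹ := by
      rw [← one_div, le_div_iff₀ hcx₀]
      calc (s.1 + s.2.1) * Real.exp (-((s.1 + s.2.1) * (κ + x₀))) * (κ + x₀)
          = (κ + x₀) * ((s.1 + s.2.1) * Real.exp (-((s.1 + s.2.1) * (κ + x₀)))) := by ring
        _ ≤ 1 := mul_exp_le ha.le hcx₀.le
    have hb2 : (s.2.1 + s.2.2) * Real.exp (-((s.2.1 + s.2.2) * (κ + xₕ))) ≤ (κ + xₕ)⁻¹ := by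
      rw [← one_div, le_div_iff₀ hcxₕ]
      calc (s.2.1 + s.2.2) * Real.exp (-((s.2.1 + s.2.2) * (κ + xₕ))) * (κ + xₕ)
          = (κ + xₕ) * ((s.2.1 + s.2.2) * Real.exp (-((s.2.1 + s.2.2) * (κ + xₕ)))) := by ring
        _ ≤ 1 := mul_exp_le hc.le hcxₕ.le
    calc (s.1 + s.2.1) * (s.2.1 + s.2.2) *
          Real.exp (-(s.1 + s.2.1) * (κ + x₀) - (s.2.1 + s.2.2) * (κ + xₕ))
        = ((s.1 + s.2.1) * Real.exp (-((s.1 + s.2.1) * (κ + x₀))))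
          * ((s.2.1 + s.2.2) * Real.exp (-((s.2.1 + s.2.2) * (κ + xₕ)))) := by
          rw [hsplit]; ring
      _ ≤ (κ + x₀)⁻¹ * (κ + xₕ)⁻¹ := by
          apply mul_le_mul hb1 hb2 (by positivity) (by positivity)
  rw [ENNReal.ofReal_mul (by positivity),
    ofReal_integral_eq_lintegral_ofReal hint hgnn,
    ← lintegral_const_mul' _ _ ENNReal.ofReal_ne_top]
  refine lintegral_congr fun s => ?_
  rw [← ENNReal.ofReal_mul (by positivity)]

lemma K_le_Aaux (hβ : 0 < β) (hb₀ : 0 < b₀) (hb₀ₕ : 0 < b₀ₕ) (hbₕ : 0 < bₕ) (hκ : 0 < κ)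
    {x₀ : ℝ} (hx₀ : 0 < x₀) :
    Kfun β b₀ b₀ₕ bₕ κ x₀ ≤ Aaux β b₀ b₀ₕ bₕ κ := by
  unfold Kfun Aaux
  refine lintegral_mono_ae ?_
  filter_upwards [slice_ae_pos hβ hb₀ hb₀ₕ hbₕ] with s hs
  obtain ⟨h1, h2, h3⟩ := hs
  have ha : 0 < s.1 + s.2.1 := add_pos h1 h2
  have hc : 0 < s.2.1 + s.2.2 := add_pos h2 h3
  refine ENNReal.ofReal_le_ofReal ?_
  have hF : 0 ≤ Real.exp (-(κ * (s.2.1 + s.2.2))) / (s.2.1 + s.2.2) := by positivity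
  have hkey : x₀ * ((s.1 + s.2.1) * Real.exp (-((κ + x₀) * (s.1 + s.2.1)))) ≤ 1 := by
    calc x₀ * ((s.1 + s.2.1) * Real.exp (-((κ + x₀) * (s.1 + s.2.1))))
        ≤ x₀ * ((s.1 + s.2.1) * Real.exp (-((s.1 + s.2.1) * x₀))) := by
          apply mul_le_mul_of_nonneg_left ?_ hx₀.le
          apply mul_le_mul_of_nonneg_left ?_ ha.le
          apply Real.exp_le_exp.mpr
          nlinarith
      _ ≤ 1 := mul_exp_le ha.le hx₀.le
  calc x₀ * ((s.1 + s.2.1) * Real.exp (-((κ + x₀) * (s.1 + s.2.1))))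
        * (Real.exp (-(κ * (s.2.1 + s.2.2))) / (s.2.1 + s.2.2))
      ≤ 1 * (Real.exp (-(κ * (s.2.1 + s.2.2))) / (s.2.1 + s.2.2)) :=
        mul_le_mul_of_nonneg_right hkey hF
    _ = Real.exp (-(κ * (s.2.1 + s.2.2))) / (s.2.1 + s.2.2) := one_mul _


noncomputable def Gaux (κ : ℝ) : ℝ × ℝ → ℝ≥0∞ := fun p =>
  if p.1 ≤ 1 then ENNReal.ofReal (Real.exp (-(κ * (p.1 + p.2))) / (p.1 + p.2)) else 0

lemma Gaux_meas : Measurable (Gaux κ) :=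
  Measurable.ite (measurableSet_le measurable_fst measurable_const) (by fun_prop)
    measurable_const

lemma rho_ae_pos (hβ : 0 < β) (hb₀ₕ : 0 < b₀ₕ) (hbₕ : 0 < bₕ) :
    ∀ᵐ p : ℝ × ℝ ∂((gammaMeasure b₀ₕ β).prod (gammaMeasure bₕ β)), 0 < p.1 ∧ 0 < p.2 := by
  haveI := isProbabilityMeasure_gammaMeasure hb₀ₕ hβ
  haveI := isProbabilityMeasure_gammaMeasure hbₕ hβ
  have mA : MeasurableSet {p : ℝ × ℝ | 0 < p.1} := measurable_fst measurableSet_Ioi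
  have mB : MeasurableSet {p : ℝ × ℝ | 0 < p.2} := measurable_snd measurableSet_Ioi
  have hA : ∀ᵐ p : ℝ × ℝ ∂(gammaMeasure b₀ₕ β).prod (gammaMeasure bₕ β), 0 < p.1 := by
    rw [Measure.ae_prod_iff_ae_ae mA]
    filter_upwards [gamma_ae_pos hb₀ₕ hβ] with y hy using ae_of_all _ fun _ => hy
  have hB : ∀ᵐ p : ℝ × ℝ ∂(gammaMeasure b₀ₕ β).prod (gammaMeasure bₕ β), 0 < p.2 := by
    rw [Measure.ae_prod_iff_ae_ae mB]
    refine ae_of_all _ fun y => ?_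
    filter_upwards [gamma_ae_pos hbₕ hβ] with z hz using hz
  exact hA.and hB

lemma gamma_Ioi_pos (hb : 0 < b₀) (hβ : 0 < β) : gammaMeasure b₀ β (Ioi (0:ℝ)) ≠ 0 := by
  haveI := isProbabilityMeasure_gammaMeasure hb hβ
  have hcompl : gammaMeasure b₀ β ((Ioi (0:ℝ))ᶜ) = 0 := by
    have h := ae_iff.mp (gamma_ae_pos hb hβ)
    have : (Ioi (0:ℝ))ᶜ = {a : ℝ | ¬ 0 < a} := by ext y; simp
    rw [this]
    exact h
  intro h0
  have h1 : (1:ℝ≥0∞) ≤ 0 := by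
    calc (1:ℝ≥0∞) = gammaMeasure b₀ β univ := (measure_univ).symm
      _ = gammaMeasure b₀ β (Ioi 0 ∪ (Ioi 0)ᶜ) := by rw [union_compl_self]
      _ ≤ gammaMeasure b₀ β (Ioi 0) + gammaMeasure b₀ β ((Ioi 0)ᶜ) := measure_union_le _ _
      _ = 0 := by rw [h0, hcompl, add_zero]
  simp at h1

lemma Aaux_top_K_top (hβ : 0 < β) (hb₀ : 0 < b₀) (hb₀ₕ : 0 < b₀ₕ) (hbₕ : 0 < bₕ) (hκ : 0 < κ)
    {x₀ : ℝ} (hx₀ : 0 < x₀) (h : Aaux β b₀ b₀ₕ bₕ κ = ⊤) :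
    Kfun β b₀ b₀ₕ bₕ κ x₀ = ⊤ := by
  haveI := isProbabilityMeasure_gammaMeasure hb₀ hβ
  haveI := isProbabilityMeasure_gammaMeasure hb₀ₕ hβ
  haveI := isProbabilityMeasure_gammaMeasure hbₕ hβ
  haveI := slice_prob hβ hb₀ hb₀ₕ hbₕ
  have hc₀pos : (0:ℝ) < κ + x₀ := by linarith
  -- marginalize
  have hmarg : Aaux β b₀ b₀ₕ bₕ κ
      = ∫⁻ p : ℝ × ℝ, ENNReal.ofReal (Real.exp (-(κ * (p.1 + p.2))) / (p.1 + p.2))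
          ∂((gammaMeasure b₀ₕ β).prod (gammaMeasure bₕ β)) := by
    unfold Aaux
    rw [sliceMeasure]
    rw [show (fun s : ℝ × ℝ × ℝ => ENNReal.ofReal
        (Real.exp (-(κ * (s.2.1 + s.2.2))) / (s.2.1 + s.2.2)))
      = fun s : ℝ × ℝ × ℝ => (fun _ : ℝ => (1:ℝ≥0∞)) s.1 * (fun p : ℝ × ℝ =>
          ENNReal.ofReal (Real.exp (-(κ * (p.1 + p.2))) / (p.1 + p.2))) s.2 from
      funext fun s => (one_mul _).symm]
    rw [lintegral_prod_mul (f := fun _ : ℝ => (1:ℝ≥0∞)) (g := fun p : ℝ × ℝ =>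
        ENNReal.ofReal (Real.exp (-(κ * (p.1 + p.2))) / (p.1 + p.2)))
        (by fun_prop) (by fun_prop),
      lintegral_one, measure_univ, one_mul]
  -- N = ⊤
  have hN : (∫⁻ p, Gaux κ p ∂((gammaMeasure b₀ₕ β).prod (gammaMeasure bₕ β))) = ⊤ := by
    by_contra hNne
    have hle : Aaux β b₀ b₀ₕ bₕ κ
        ≤ (∫⁻ p, Gaux κ p ∂((gammaMeasure b₀ₕ β).prod (gammaMeasure bₕ β))) + 1 := by
      rw [hmarg]
      calc (∫⁻ p : ℝ × ℝ, ENNReal.ofReal (Real.exp (-(κ * (p.1 + p.2))) / (p.1 + p.2))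
            ∂((gammaMeasure b₀ₕ β).prod (gammaMeasure bₕ β)))
          ≤ ∫⁻ p, (Gaux κ p + 1) ∂((gammaMeasure b₀ₕ β).prod (gammaMeasure bₕ β)) := by
            refine lintegral_mono_ae ?_
            filter_upwards [rho_ae_pos hβ hb₀ₕ hbₕ] with p hp
            obtain ⟨hp1, hp2⟩ := hp
            by_cases hc1 : p.1 ≤ 1
            · unfold Gaux
              rw [if_pos hc1]
              exact le_self_add
            · have hgt : (1:ℝ) < p.1 := not_le.mp hc1
              have hb : Real.exp (-(κ * (p.1 + p.2))) / (p.1 + p.2) ≤ 1 := by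
                rw [div_le_one (by linarith)]
                calc Real.exp (-(κ * (p.1 + p.2))) ≤ 1 :=
                      Real.exp_le_one_iff.mpr (by nlinarith)
                  _ ≤ p.1 + p.2 := by linarith
              unfold Gaux
              rw [if_neg hc1, zero_add]
              calc ENNReal.ofReal (Real.exp (-(κ * (p.1 + p.2))) / (p.1 + p.2))
                  ≤ ENNReal.ofReal 1 := ENNReal.ofReal_le_ofReal hb
                _ = 1 := ENNReal.ofReal_one
        _ = (∫⁻ p, Gaux κ p ∂((gammaMeasure b₀ₕ β).prod (gammaMeasure bₕ β))) + 1 := by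
            rw [lintegral_add_left Gaux_meas, lintegral_one, measure_univ]
    rw [h] at hle
    exact hNne ((ENNReal.add_eq_top.mp (top_le_iff.mp hle)).resolve_right (by simp))
  -- lower bound
  have hf1meas : Measurable fun y : ℝ => ENNReal.ofReal (y * Real.exp (-((κ + x₀) * y))) := by
    fun_prop
  have hf1pos : 0 < ∫⁻ y, ENNReal.ofReal (y * Real.exp (-((κ + x₀) * y)))
      ∂(gammaMeasure b₀ β) := by
    rw [lintegral_pos_iff_support hf1meas]
    have hsub : Ioi (0:ℝ) ⊆ Function.support fun y : ℝ =>
        ENNReal.ofReal (y * Real.exp (-((κ + x₀) * y))) := by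
      intro y hy
      have hy' : (0:ℝ) < y := hy
      simp only [Function.mem_support]
      exact (ENNReal.ofReal_pos.mpr (by positivity)).ne'
    calc (0:ℝ≥0∞) < gammaMeasure b₀ β (Ioi 0) :=
          pos_iff_ne_zero.mpr (gamma_Ioi_pos hb₀ hβ)
      _ ≤ _ := measure_mono hsub
  have hlow : ENNReal.ofReal (x₀ * Real.exp (-(κ + x₀)))
      * ((∫⁻ y, ENNReal.ofReal (y * Real.exp (-((κ + x₀) * y))) ∂(gammaMeasure b₀ β))
        * (∫⁻ p, Gaux κ p ∂((gammaMeasure b₀ₕ β).prod (gammaMeasure bₕ β))))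
      ≤ Kfun β b₀ b₀ₕ bₕ κ x₀ := by
    have hprod : ∫⁻ s : ℝ × ℝ × ℝ, ENNReal.ofReal (s.1 * Real.exp (-((κ + x₀) * s.1)))
          * Gaux κ s.2 ∂(sliceMeasure b₀ b₀ₕ bₕ β)
        = (∫⁻ y, ENNReal.ofReal (y * Real.exp (-((κ + x₀) * y))) ∂(gammaMeasure b₀ β))
          * (∫⁻ p, Gaux κ p ∂((gammaMeasure b₀ₕ β).prod (gammaMeasure bₕ β))) := by
      rw [sliceMeasure]
      exact lintegral_prod_mul hf1meas.aemeasurable Gaux_meas.aemeasurable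
    rw [← hprod, ← lintegral_const_mul' _ _ ENNReal.ofReal_ne_top]
    unfold Kfun
    refine lintegral_mono_ae ?_
    filter_upwards [slice_ae_pos hβ hb₀ hb₀ₕ hbₕ] with s hs
    obtain ⟨h1, h2, h3⟩ := hs
    have hc : 0 < s.2.1 + s.2.2 := add_pos h2 h3
    by_cases hc1 : s.2.1 ≤ 1
    · unfold Gaux
      rw [if_pos hc1]
      rw [← ENNReal.ofReal_mul (by positivity), ← ENNReal.ofReal_mul (by positivity)]
      refine ENNReal.ofReal_le_ofReal ?_
      have hF : 0 ≤ Real.exp (-(κ * (s.2.1 + s.2.2))) / (s.2.1 + s.2.2) := by positivity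
      have e3 : Real.exp (-(κ + x₀)) * Real.exp (-((κ + x₀) * s.1))
          = Real.exp (-((κ + x₀) * (s.1 + 1))) := by
        rw [← Real.exp_add]; congr 1; ring
      have key : s.1 * Real.exp (-((κ + x₀) * (s.1 + 1)))
          ≤ (s.1 + s.2.1) * Real.exp (-((κ + x₀) * (s.1 + s.2.1))) := by
        refine mul_le_mul (by linarith) (Real.exp_le_exp.mpr ?_) (Real.exp_pos _).le
          (by linarith)
        nlinarith
      calc x₀ * Real.exp (-(κ + x₀)) * (s.1 * Real.exp (-((κ + x₀) * s.1)) *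
            (Real.exp (-(κ * (s.2.1 + s.2.2))) / (s.2.1 + s.2.2)))
          = x₀ * (s.1 * (Real.exp (-(κ + x₀)) * Real.exp (-((κ + x₀) * s.1))))
            * (Real.exp (-(κ * (s.2.1 + s.2.2))) / (s.2.1 + s.2.2)) := by ring
        _ = x₀ * (s.1 * Real.exp (-((κ + x₀) * (s.1 + 1))))
            * (Real.exp (-(κ * (s.2.1 + s.2.2))) / (s.2.1 + s.2.2)) := by rw [e3]
        _ ≤ x₀ * ((s.1 + s.2.1) * Real.exp (-((κ + x₀) * (s.1 + s.2.1))))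
            * (Real.exp (-(κ * (s.2.1 + s.2.2))) / (s.2.1 + s.2.2)) := by
            exact mul_le_mul_of_nonneg_right (mul_le_mul_of_nonneg_left key hx₀.le) hF
    · unfold Gaux
      rw [if_neg hc1, mul_zero, mul_zero]
      exact zero_le
  rw [hN, ENNReal.mul_top hf1pos.ne', ENNReal.mul_top
    (ENNReal.ofReal_pos.mpr (by positivity)).ne'] at hlow
  exact top_le_iff.mp hlow


end ExceedAux
end ExceedAuxSection

/-- Second moment of the exceedance process in the latent trawl model: with
`Λ₀ = S₀ + S₀ₕ`, `Λₕ = S₀ₕ + Sₕ` in the slice model and `κ > 0`,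
`E[X₀Xₕ] = ∫₀^∞∫₀^∞ x₀ xₕ E[Λ₀Λₕ e^{-Λ₀(κ+x₀) - Λₕ(κ+xₕ)}] dx₀ dxₕ`
`= ∫_κ^∞∫_κ^∞ (1+u₀/β)^{-b₀}(1+(u₀+uₕ)/β)^{-b₀ₕ}(1+uₕ/β)^{-bₕ} du₀ duₕ`,
and equivalently `E[e^{-κ(Λ₀+Λₕ)}/(Λ₀Λₕ)]` equals the same double integral. -/
theorem exceedance_second_moment (β b₀ b₀ₕ bₕ κ : ℝ) (hβ : 0 < β)
    (hb₀ : 0 < b₀) (hb₀ₕ : 0 < b₀ₕ) (hbₕ : 0 < bₕ) (hκ : 0 < κ) :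
    (∫ x₀ in Ioi (0 : ℝ), ∫ xₕ in Ioi (0 : ℝ),
        x₀ * xₕ *
          ∫ s : ℝ × ℝ × ℝ, (s.1 + s.2.1) * (s.2.1 + s.2.2) *
            Real.exp (-(s.1 + s.2.1) * (κ + x₀) - (s.2.1 + s.2.2) * (κ + xₕ))
            ∂(sliceMeasure b₀ b₀ₕ bₕ β))
      = (∫ u₀ in Ioi κ, ∫ uₕ in Ioi κ,
          (1 + u₀ / β) ^ (-b₀) * (1 + (u₀ + uₕ) / β) ^ (-b₀ₕ) * (1 + uₕ / β) ^ (-bₕ))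
    ∧ (∫ s : ℝ × ℝ × ℝ,
          Real.exp (-κ * ((s.1 + s.2.1) + (s.2.1 + s.2.2)))
            / ((s.1 + s.2.1) * (s.2.1 + s.2.2)) ∂(sliceMeasure b₀ b₀ₕ bₕ β))
      = (∫ u₀ in Ioi κ, ∫ uₕ in Ioi κ,
          (1 + u₀ / β) ^ (-b₀) * (1 + (u₀ + uₕ) / β) ^ (-b₀ₕ) * (1 + uₕ / β) ^ (-bₕ)) := by
  haveI := isProbabilityMeasure_gammaMeasure hb₀ hβ
  haveI := isProbabilityMeasure_gammaMeasure hb₀ₕ hβ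
  haveI := isProbabilityMeasure_gammaMeasure hbₕ hβ
  haveI := ExceedAux.slice_prob hβ hb₀ hb₀ₕ hbₕ
  have hA_eq_R := ExceedAux.A_eq_R hβ hb₀ hb₀ₕ hbₕ hκ
  have hRHS := ExceedAux.RHS_eq hβ hb₀ hb₀ₕ hbₕ hκ
  simp only [ExceedAux.W, ExceedAux.Ifun] at hRHS
  have hT : (∫⁻ x₀ in Ioi (0:ℝ), ExceedAux.Kfun β b₀ b₀ₕ bₕ κ x₀)
      = ∫⁻ s : ℝ × ℝ × ℝ, ENNReal.ofReal
          (Real.exp (-κ * ((s.1 + s.2.1) + (s.2.1 + s.2.2)))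
            / ((s.1 + s.2.1) * (s.2.1 + s.2.2))) ∂(sliceMeasure b₀ b₀ₕ bₕ β) :=
    ExceedAux.T_eq_A hβ hb₀ hb₀ₕ hbₕ hκ
  -- second conjunct
  have hconj2 : (∫ s : ℝ × ℝ × ℝ,
        Real.exp (-κ * ((s.1 + s.2.1) + (s.2.1 + s.2.2)))
          / ((s.1 + s.2.1) * (s.2.1 + s.2.2)) ∂(sliceMeasure b₀ b₀ₕ bₕ β))
      = (∫ u₀ in Ioi κ, ∫ uₕ in Ioi κ,
          (1 + u₀ / β) ^ (-b₀) * (1 + (u₀ + uₕ) / β) ^ (-b₀ₕ) * (1 + uₕ / β) ^ (-bₕ)) := by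
    rw [integral_eq_lintegral_of_nonneg_ae ?_ ?_, hRHS]
    · exact congrArg ENNReal.toReal hA_eq_R
    · filter_upwards [ExceedAux.slice_ae_pos hβ hb₀ hb₀ₕ hbₕ] with s hs
      obtain ⟨h1, h2, h3⟩ := hs
      have ha : 0 < s.1 + s.2.1 := add_pos h1 h2
      have hc : 0 < s.2.1 + s.2.2 := add_pos h2 h3
      positivity
    · exact (by fun_prop : Measurable fun s : ℝ × ℝ × ℝ =>
        Real.exp (-κ * ((s.1 + s.2.1) + (s.2.1 + s.2.2)))
          / ((s.1 + s.2.1) * (s.2.1 + s.2.2))).aestronglyMeasurable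
  refine ⟨?_, hconj2⟩
  -- first conjunct
  have hE_inner : ∀ x₀ ∈ Ioi (0:ℝ),
      (∫ xₕ in Ioi (0:ℝ), x₀ * xₕ *
          ∫ s : ℝ × ℝ × ℝ, (s.1 + s.2.1) * (s.2.1 + s.2.2) *
            Real.exp (-(s.1 + s.2.1) * (κ + x₀) - (s.2.1 + s.2.2) * (κ + xₕ))
            ∂(sliceMeasure b₀ b₀ₕ bₕ β))
        = (ExceedAux.Kfun β b₀ b₀ₕ bₕ κ x₀).toReal := by
    intro x₀ hx₀
    have hx₀' : (0:ℝ) < x₀ := hx₀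
    have hEsm : StronglyMeasurable fun xₕ : ℝ =>
        ∫ s : ℝ × ℝ × ℝ, (s.1 + s.2.1) * (s.2.1 + s.2.2) *
          Real.exp (-(s.1 + s.2.1) * (κ + x₀) - (s.2.1 + s.2.2) * (κ + xₕ))
          ∂(sliceMeasure b₀ b₀ₕ bₕ β) := by
      apply MeasureTheory.StronglyMeasurable.integral_prod_right'
        (f := fun p : ℝ × (ℝ × ℝ × ℝ) => (p.2.1 + p.2.2.1) * (p.2.2.1 + p.2.2.2) *
          Real.exp (-(p.2.1 + p.2.2.1) * (κ + x₀) - (p.2.2.1 + p.2.2.2) * (κ + p.1)))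
      exact (by fun_prop : Measurable fun p : ℝ × (ℝ × ℝ × ℝ) =>
        (p.2.1 + p.2.2.1) * (p.2.2.1 + p.2.2.2) *
          Real.exp (-(p.2.1 + p.2.2.1) * (κ + x₀)
            - (p.2.2.1 + p.2.2.2) * (κ + p.1))).stronglyMeasurable
    rw [integral_eq_lintegral_of_nonneg_ae ?_ ?_]
    · congr 1
      have hcongr : (∫⁻ xₕ in Ioi (0:ℝ), ENNReal.ofReal (x₀ * xₕ *
            ∫ s : ℝ × ℝ × ℝ, (s.1 + s.2.1) * (s.2.1 + s.2.2) *
              Real.exp (-(s.1 + s.2.1) * (κ + x₀) - (s.2.1 + s.2.2) * (κ + xₕ))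
              ∂(sliceMeasure b₀ b₀ₕ bₕ β)))
          = ∫⁻ xₕ in Ioi (0:ℝ), ∫⁻ s : ℝ × ℝ × ℝ, ENNReal.ofReal
              (x₀ * xₕ * ((s.1 + s.2.1) * (s.2.1 + s.2.2) *
                Real.exp (-(s.1 + s.2.1) * (κ + x₀) - (s.2.1 + s.2.2) * (κ + xₕ))))
              ∂(sliceMeasure b₀ b₀ₕ bₕ β) := by
        refine lintegral_congr_ae ?_
        filter_upwards [ae_restrict_mem (measurableSet_Ioi (a := (0:ℝ)))] with xₕ hxₕ
        exact ExceedAux.E_eq hβ hb₀ hb₀ₕ hbₕ hκ hx₀' hxₕ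
      rw [hcongr, ExceedAux.K_eq hβ hb₀ hb₀ₕ hbₕ hκ hx₀']
      rfl
    · filter_upwards [ae_restrict_mem (measurableSet_Ioi (a := (0:ℝ)))] with xₕ hxₕ
      have hxₕ' : (0:ℝ) < xₕ := hxₕ
      have hE : 0 ≤ ∫ s : ℝ × ℝ × ℝ, (s.1 + s.2.1) * (s.2.1 + s.2.2) *
          Real.exp (-(s.1 + s.2.1) * (κ + x₀) - (s.2.1 + s.2.2) * (κ + xₕ))
          ∂(sliceMeasure b₀ b₀ₕ bₕ β) := by
        refine integral_nonneg_of_ae ?_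
        filter_upwards [ExceedAux.slice_ae_pos hβ hb₀ hb₀ₕ hbₕ] with s hs
        obtain ⟨h1, h2, h3⟩ := hs
        have ha : 0 < s.1 + s.2.1 := add_pos h1 h2
        have hc : 0 < s.2.1 + s.2.2 := add_pos h2 h3
        positivity
      exact mul_nonneg (mul_nonneg hx₀'.le hxₕ'.le) hE
    · exact ((stronglyMeasurable_const.mul stronglyMeasurable_id).mul
        hEsm).aestronglyMeasurable
  rw [setIntegral_congr_fun measurableSet_Ioi hE_inner, hRHS, ← hA_eq_R, ← hT]
  by_cases hAtop : ExceedAux.Aaux β b₀ b₀ₕ bₕ κ = ⊤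
  · have hKtop : ∀ x₀ ∈ Ioi (0:ℝ), ExceedAux.Kfun β b₀ b₀ₕ bₕ κ x₀ = ⊤ := fun x₀ hx₀ =>
      ExceedAux.Aaux_top_K_top hβ hb₀ hb₀ₕ hbₕ hκ hx₀ hAtop
    have hL : (∫ x₀ in Ioi (0:ℝ), (ExceedAux.Kfun β b₀ b₀ₕ bₕ κ x₀).toReal) = 0 := by
      rw [setIntegral_congr_fun measurableSet_Ioi
        (fun x₀ hx₀ => by rw [hKtop x₀ hx₀, ENNReal.toReal_top] : EqOn _ (fun _ => (0:ℝ)) _)]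
      simp
    have hR : (∫⁻ x₀ in Ioi (0:ℝ), ExceedAux.Kfun β b₀ b₀ₕ bₕ κ x₀) = ⊤ := by
      rw [setLIntegral_congr_fun_ae measurableSet_Ioi (ae_of_all _ hKtop), setLIntegral_const,
        Real.volume_Ioi, ENNReal.top_mul_top]
    rw [hL, hR, ENNReal.toReal_top]
  · have hKfin : ∀ x₀ ∈ Ioi (0:ℝ), ExceedAux.Kfun β b₀ b₀ₕ bₕ κ x₀ ≠ ⊤ := fun x₀ hx₀ =>
      ne_top_of_le_ne_top hAtop (ExceedAux.K_le_Aaux hβ hb₀ hb₀ₕ hbₕ hκ hx₀)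
    rw [integral_eq_lintegral_of_nonneg_ae
      (ae_of_all _ fun x₀ => ENNReal.toReal_nonneg)
      ((ExceedAux.Kfun_meas hβ hb₀ hb₀ₕ hbₕ).ennreal_toReal.aestronglyMeasurable)]
    congr 1
    refine lintegral_congr_ae ?_
    filter_upwards [ae_restrict_mem (measurableSet_Ioi (a := (0:ℝ)))] with x₀ hx₀
    exact ENNReal.ofReal_toReal (hKfin x₀ hx₀)
end

section
/- Conditional tail dependence function of the latent trawl model: in the slice model with κ > 0 and b₀ = bₕ, for all u₁, u₂ ∈ [0,1), writing y₁ = F₂ₑ⁻¹(u₁) and y₂ = F₂ₑ⁻¹(u₂), the ratio (∫_{ℝ³} exp(−(κ+y₁)Λ₀ − (κ+y₂)Λₕ) dμ) / (∫_{ℝ³} exp(−(κ+y₁)Λ₀ − κΛₕ) dμ) equals (1 + y₂/(β + 2κ + y₁))^{−b₀ₕ} (1 + y₂/(β + κ))^{−bₕ}. The left-hand side is the conditional probability P(F₂ₑ(X_h) > u₂ | F₂ₑ(X₀) > u₁, X₀ > 0, X_h > 0) in the latent trawl model. -/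
open MeasureTheory ProbabilityTheory Real Set

lemma gamma_exp_integral {a r t : ℝ} (ha : 0 < a) (hr : 0 < r) (ht : 0 ≤ t) :
    ∫ x, Real.exp (-(t * x)) ∂(gammaMeasure a r) = (r / (r + t)) ^ a := by
  have hrt : 0 < r + t := by linarith
  have hΓ : (0 : ℝ) < Real.Gamma a := Real.Gamma_pos_of_pos ha
  have hpdf : gammaPDF a r
      = fun x => ((Real.toNNReal (gammaPDFReal a r x) : NNReal) : ENNReal) := rfl
  rw [gammaMeasure, hpdf,
    integral_withDensity_eq_integral_smul
      ((measurable_gammaPDFReal a r).real_toNNReal) _]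
  have h1 : ∀ x : ℝ,
      (Real.toNNReal (gammaPDFReal a r x) : NNReal) • Real.exp (-(t * x))
        = gammaPDFReal a r x * Real.exp (-(t * x)) := by
    intro x
    rw [NNReal.smul_def, smul_eq_mul, Real.coe_toNNReal _ (gammaPDFReal_nonneg ha hr x)]
  simp_rw [h1]
  have h2 : (fun x => gammaPDFReal a r x * Real.exp (-(t * x)))
      =ᵐ[volume] (Ioi (0:ℝ)).indicator
        (fun x => gammaPDFReal a r x * Real.exp (-(t * x))) := by
    filter_upwards [compl_mem_ae_iff.2 (measure_singleton (0:ℝ))] with x hx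
    rcases lt_trichotomy x 0 with h | h | h
    · rw [Set.indicator_of_notMem (by simp [not_lt.2 h.le]), gammaPDFReal,
        if_neg (not_le.2 h), zero_mul]
    · exact absurd h hx
    · simp [Set.indicator_of_mem (mem_Ioi.2 h)]
  rw [integral_congr_ae h2, integral_indicator measurableSet_Ioi]
  have h3 : ∀ x ∈ Ioi (0:ℝ), gammaPDFReal a r x * Real.exp (-(t * x))
      = (r ^ a / Real.Gamma a) * (x ^ (a - 1) * Real.exp (-((r + t) * x))) := by
    intro x hx
    rw [gammaPDFReal, if_pos (le_of_lt hx), mul_assoc, ← Real.exp_add,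
      show -(r * x) + -(t * x) = -((r + t) * x) by ring]
    ring
  rw [setIntegral_congr_fun measurableSet_Ioi h3, integral_const_mul,
    integral_rpow_mul_exp_neg_mul_Ioi ha hrt, Real.div_rpow hr.le hrt.le,
    Real.div_rpow zero_le_one hrt.le, Real.one_rpow]
  field_simp

/-- Conditional tail dependence function of the latent trawl model: with
`Λ₀ = S₀ + S₀ₕ`, `Λₕ = S₀ₕ + Sₕ` in the slice model, `κ > 0`, `b₀ = bₕ`, and writing
`y₁ = F₂ₑ⁻¹(u₁)`, `y₂ = F₂ₑ⁻¹(u₂)`, for all `u₁, u₂ ∈ [0,1)`,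
`P(F₂ₑ(Xₕ) > u₂ | F₂ₑ(X₀) > u₁, X₀ > 0, Xₕ > 0)`
`= E[e^{-(κ+y₁)Λ₀ - (κ+y₂)Λₕ}] / E[e^{-(κ+y₁)Λ₀ - κΛₕ}]`
`= (1 + y₂/(β + 2κ + y₁))^{-b₀ₕ} (1 + y₂/(β+κ))^{-bₕ}`. -/
theorem conditional_tail_dependence_function (β b₀ b₀ₕ bₕ κ : ℝ) (hβ : 0 < β)
    (hb₀ : 0 < b₀) (hb₀ₕ : 0 < b₀ₕ) (hbₕ : 0 < bₕ) (hκ : 0 < κ) (hbb : b₀ = bₕ)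
    (F₂ₑ : ℝ → ℝ)
    (hF : ∀ x : ℝ, F₂ₑ x
      = 1 - (1 + x / (β + 2 * κ)) ^ (-b₀ₕ) * (1 + x / (β + κ)) ^ (-b₀))
    (Finv : ℝ → ℝ)
    (hFinv : ∀ u ∈ Ico (0 : ℝ) 1, 0 ≤ Finv u ∧ F₂ₑ (Finv u) = u) :
    ∀ u₁ ∈ Ico (0 : ℝ) 1, ∀ u₂ ∈ Ico (0 : ℝ) 1,
      (∫ s : ℝ × ℝ × ℝ,
          Real.exp (-(κ + Finv u₁) * (s.1 + s.2.1) - (κ + Finv u₂) * (s.2.1 + s.2.2))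
          ∂(sliceMeasure b₀ b₀ₕ bₕ β))
        / (∫ s : ℝ × ℝ × ℝ,
          Real.exp (-(κ + Finv u₁) * (s.1 + s.2.1) - κ * (s.2.1 + s.2.2))
          ∂(sliceMeasure b₀ b₀ₕ bₕ β))
      = (1 + Finv u₂ / (β + 2 * κ + Finv u₁)) ^ (-b₀ₕ)
          * (1 + Finv u₂ / (β + κ)) ^ (-bₕ) := by
  intro u₁ hu₁ u₂ hu₂
  obtain ⟨hy₁, -⟩ := hFinv u₁ hu₁
  obtain ⟨hy₂, -⟩ := hFinv u₂ hu₂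
  set y₁ := Finv u₁
  set y₂ := Finv u₂
  haveI : IsProbabilityMeasure (gammaMeasure b₀ β) := isProbabilityMeasure_gammaMeasure hb₀ hβ
  haveI : IsProbabilityMeasure (gammaMeasure b₀ₕ β) := isProbabilityMeasure_gammaMeasure hb₀ₕ hβ
  haveI : IsProbabilityMeasure (gammaMeasure bₕ β) := isProbabilityMeasure_gammaMeasure hbₕ hβ
  have key : ∀ c : ℝ, 0 ≤ c →
      (∫ s : ℝ × ℝ × ℝ,
        Real.exp (-(κ + y₁) * (s.1 + s.2.1) - c * (s.2.1 + s.2.2))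
        ∂(sliceMeasure b₀ b₀ₕ bₕ β))
      = (β / (β + (κ + y₁))) ^ b₀ * ((β / (β + (κ + y₁ + c))) ^ b₀ₕ
          * (β / (β + c)) ^ bₕ) := by
    intro c hc
    have heq : ∀ s : ℝ × ℝ × ℝ,
        Real.exp (-(κ + y₁) * (s.1 + s.2.1) - c * (s.2.1 + s.2.2))
        = Real.exp (-((κ + y₁) * s.1))
          * (Real.exp (-((κ + y₁ + c) * s.2.1)) * Real.exp (-(c * s.2.2))) := by
      intro s
      rw [← Real.exp_add, ← Real.exp_add]
      congr 1
      ring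
    simp_rw [heq, sliceMeasure]
    rw [integral_prod_mul (f := fun x => Real.exp (-((κ + y₁) * x)))
        (g := fun p : ℝ × ℝ => Real.exp (-((κ + y₁ + c) * p.1)) * Real.exp (-(c * p.2))),
      integral_prod_mul (f := fun x => Real.exp (-((κ + y₁ + c) * x)))
        (g := fun x => Real.exp (-(c * x))),
      gamma_exp_integral hb₀ hβ (by linarith),
      gamma_exp_integral hb₀ₕ hβ (by linarith),
      gamma_exp_integral hbₕ hβ hc]
  rw [key (κ + y₂) (by linarith), key κ hκ.le]
  have p1 : (0:ℝ) < β + (κ + y₁) := by linarith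
  have p2 : (0:ℝ) < β + (κ + y₁ + (κ + y₂)) := by linarith
  have p3 : (0:ℝ) < β + (κ + y₂) := by linarith
  have p4 : (0:ℝ) < β + (κ + y₁ + κ) := by linarith
  have p5 : (0:ℝ) < β + κ := by linarith
  have p6 : (0:ℝ) < β + 2 * κ + y₁ := by linarith
  have hA : (1 + y₂ / (β + 2 * κ + y₁)) ^ (-b₀ₕ)
      = (β + (κ + y₁ + κ)) ^ b₀ₕ / (β + (κ + y₁ + (κ + y₂))) ^ b₀ₕ := by
    have : (1 + y₂ / (β + 2 * κ + y₁))
        = (β + (κ + y₁ + (κ + y₂))) / (β + (κ + y₁ + κ)) := by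
      field_simp
      ring
    rw [this, Real.rpow_neg (by positivity), ← Real.inv_rpow (by positivity), inv_div,
      Real.div_rpow p4.le p2.le]
  have hB : (1 + y₂ / (β + κ)) ^ (-bₕ)
      = (β + κ) ^ bₕ / (β + (κ + y₂)) ^ bₕ := by
    have : (1 + y₂ / (β + κ)) = (β + (κ + y₂)) / (β + κ) := by
      field_simp
      ring
    rw [this, Real.rpow_neg (by positivity), ← Real.inv_rpow (by positivity), inv_div,
      Real.div_rpow p5.le p3.le]
  rw [hA, hB, Real.div_rpow hβ.le p1.le, Real.div_rpow hβ.le p2.le,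
    Real.div_rpow hβ.le p3.le, Real.div_rpow hβ.le p4.le, Real.div_rpow hβ.le p5.le]
  have h1 : (β + (κ + y₁)) ^ b₀ ≠ 0 := by positivity
  have h2 : (β + (κ + y₁ + (κ + y₂))) ^ b₀ₕ ≠ 0 := by positivity
  have h3 : (β + (κ + y₂)) ^ bₕ ≠ 0 := by positivity
  have h4 : (β + (κ + y₁ + κ)) ^ b₀ₕ ≠ 0 := by positivity
  have h5 : (β + κ) ^ bₕ ≠ 0 := by positivity
  have hβb₀ : (β:ℝ) ^ b₀ ≠ 0 := by positivity
  have hβb₀ₕ : (β:ℝ) ^ b₀ₕ ≠ 0 := by positivity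
  have hβbₕ : (β:ℝ) ^ bₕ ≠ 0 := by positivity
  field_simp
end

section
/- Closed form of the conditional distribution function F₂ₑ: in the slice model with κ > 0, for every x ≥ 0, (∫_{ℝ³} exp(−(κ+x)Λ₀ − κΛₕ) dμ) / (∫_{ℝ³} exp(−κ(Λ₀+Λₕ)) dμ) = (1 + x/(β+2κ))^{−b₀ₕ} (1 + x/(β+κ))^{−b₀}. The left-hand side is P(X₀ > x | X₀ > 0, X_h > 0) in the latent trawl model, so that F₂ₑ(x) := P(X₀ ≤ x | X₀ > 0, X_h > 0) = 1 − (1 + x/(β+2κ))^{−b₀ₕ} (1 + x/(β+κ))^{−b₀}. -/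
open MeasureTheory ProbabilityTheory Real Set

/-- Laplace transform of the Gamma distribution. -/
lemma gamma_laplace {a r : ℝ} (ha : 0 < a) (hr : 0 < r) {t : ℝ} (ht : 0 < t) :
    ∫ y : ℝ, Real.exp (-t * y) ∂(gammaMeasure a r) = (r / (r + t)) ^ a := by
  have hrt : 0 < r + t := by linarith
  have hmeas : Measurable fun y : ℝ => (gammaPDFReal a r y).toNNReal :=
    (measurable_gammaPDFReal a r).real_toNNReal
  have hdens : gammaMeasure a r
      = MeasureTheory.volume.withDensity
        (fun y : ℝ => ((gammaPDFReal a r y).toNNReal : ENNReal)) := rfl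
  rw [hdens, integral_withDensity_eq_integral_smul hmeas]
  have heq : ∀ y : ℝ, (gammaPDFReal a r y).toNNReal • Real.exp (-t * y)
      = Set.indicator (Set.Ici (0:ℝ))
          (fun y => r ^ a / Real.Gamma a * (y ^ (a - 1) * Real.exp (-((r + t) * y)))) y := by
    intro y
    rw [NNReal.smul_def, smul_eq_mul, Real.coe_toNNReal _ (gammaPDFReal_nonneg ha hr y)]
    unfold gammaPDFReal
    by_cases hy : 0 ≤ y
    · rw [Set.indicator_of_mem (Set.mem_Ici.mpr hy), if_pos hy,
        show -((r + t) * y) = -(r * y) + -t * y by ring, Real.exp_add]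
      ring
    · rw [Set.indicator_of_notMem (by simpa using hy), if_neg hy, zero_mul]
  simp_rw [heq]
  rw [integral_indicator measurableSet_Ici, MeasureTheory.integral_Ici_eq_integral_Ioi,
    integral_const_mul, integral_rpow_mul_exp_neg_mul_Ioi ha hrt,
    Real.div_rpow hr.le hrt.le, Real.div_rpow (by norm_num) hrt.le, Real.one_rpow]
  have hG : Real.Gamma a ≠ 0 := (Real.Gamma_pos_of_pos ha).ne'
  field_simp

/-- Closed form of the conditional distribution function `F₂ₑ`: with
`Λ₀ = S₀ + S₀ₕ`, `Λₕ = S₀ₕ + Sₕ` in the slice model and `κ > 0`, for all `x ≥ 0`,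
`P(X₀ > x | X₀ > 0, Xₕ > 0) = E[e^{-(κ+x)Λ₀ - κΛₕ}] / E[e^{-κ(Λ₀+Λₕ)}]`
`= (1 + x/(β+2κ))^{-b₀ₕ} (1 + x/(β+κ))^{-b₀}`, so that
`F₂ₑ(x) = 1 - (1 + x/(β+2κ))^{-b₀ₕ} (1 + x/(β+κ))^{-b₀}`. -/
theorem conditional_df_closed_form (β b₀ b₀ₕ bₕ κ : ℝ) (hβ : 0 < β)
    (hb₀ : 0 < b₀) (hb₀ₕ : 0 < b₀ₕ) (hbₕ : 0 < bₕ) (hκ : 0 < κ) :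
    ∀ x : ℝ, 0 ≤ x →
      (∫ s : ℝ × ℝ × ℝ,
          Real.exp (-(κ + x) * (s.1 + s.2.1) - κ * (s.2.1 + s.2.2))
          ∂(sliceMeasure b₀ b₀ₕ bₕ β))
        / (∫ s : ℝ × ℝ × ℝ,
          Real.exp (-κ * ((s.1 + s.2.1) + (s.2.1 + s.2.2)))
          ∂(sliceMeasure b₀ b₀ₕ bₕ β))
      = (1 + x / (β + 2 * κ)) ^ (-b₀ₕ) * (1 + x / (β + κ)) ^ (-b₀) := by
  intro x hx
  have hP1 : (0:ℝ) < β + κ := by linarith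
  have hP2 : (0:ℝ) < β + 2 * κ := by linarith
  have hQ1 : (0:ℝ) < β + κ + x := by linarith
  have hQ2 : (0:ℝ) < β + 2 * κ + x := by linarith
  have i0 := isProbabilityMeasure_gammaMeasure hb₀ hβ
  have i1 := isProbabilityMeasure_gammaMeasure hb₀ₕ hβ
  have i2 := isProbabilityMeasure_gammaMeasure hbₕ hβ
  have key : ∀ A B C : ℝ, 0 < A → 0 < B → 0 < C →
      (∫ s : ℝ × ℝ × ℝ, Real.exp (-A * s.1) * (Real.exp (-B * s.2.1) * Real.exp (-C * s.2.2))
        ∂(sliceMeasure b₀ b₀ₕ bₕ β))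
      = (β / (β + A)) ^ b₀ * ((β / (β + B)) ^ b₀ₕ * (β / (β + C)) ^ bₕ) := by
    intro A B C hA hB hC
    rw [sliceMeasure,
      integral_prod_mul (f := fun u : ℝ => Real.exp (-A * u))
        (g := fun p : ℝ × ℝ => Real.exp (-B * p.1) * Real.exp (-C * p.2)),
      integral_prod_mul (f := fun u : ℝ => Real.exp (-B * u))
        (g := fun u : ℝ => Real.exp (-C * u)),
      gamma_laplace hb₀ hβ hA, gamma_laplace hb₀ₕ hβ hB, gamma_laplace hbₕ hβ hC]
  have hnum : (∫ s : ℝ × ℝ × ℝ,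
      Real.exp (-(κ + x) * (s.1 + s.2.1) - κ * (s.2.1 + s.2.2)) ∂(sliceMeasure b₀ b₀ₕ bₕ β))
      = ∫ s : ℝ × ℝ × ℝ,
        Real.exp (-(κ + x) * s.1) * (Real.exp (-(2 * κ + x) * s.2.1) * Real.exp (-κ * s.2.2))
        ∂(sliceMeasure b₀ b₀ₕ bₕ β) := by
    refine integral_congr_ae (Filter.Eventually.of_forall fun s => ?_)
    dsimp only
    rw [← Real.exp_add, ← Real.exp_add]
    congr 1; ring
  have hden : (∫ s : ℝ × ℝ × ℝ,
      Real.exp (-κ * ((s.1 + s.2.1) + (s.2.1 + s.2.2))) ∂(sliceMeasure b₀ b₀ₕ bₕ β))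
      = ∫ s : ℝ × ℝ × ℝ,
        Real.exp (-κ * s.1) * (Real.exp (-(2 * κ) * s.2.1) * Real.exp (-κ * s.2.2))
        ∂(sliceMeasure b₀ b₀ₕ bₕ β) := by
    refine integral_congr_ae (Filter.Eventually.of_forall fun s => ?_)
    dsimp only
    rw [← Real.exp_add, ← Real.exp_add]
    congr 1; ring
  rw [hnum, hden, key _ _ _ (by linarith) (by linarith) hκ,
    key _ _ _ hκ (by linarith) hκ]
  have hrat : ∀ b P Q : ℝ, 0 < P → 0 < Q →
      (β / Q) ^ b / (β / P) ^ b = (Q / P) ^ (-b) := by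
    intro b P Q hP hQ
    rw [← Real.div_rpow (by positivity) (by positivity),
      Real.rpow_neg (by positivity), ← Real.inv_rpow (by positivity)]
    congr 1
    field_simp
  have h1 : β + (κ + x) = β + κ + x := by ring
  have h2 : β + (2 * κ + x) = β + 2 * κ + x := by ring
  have e1 : (1 : ℝ) + x / (β + 2 * κ) = (β + 2 * κ + x) / (β + 2 * κ) := by
    field_simp
  have e2 : (1 : ℝ) + x / (β + κ) = (β + κ + x) / (β + κ) := by
    field_simp
  rw [h1, h2, e1, e2, ← hrat b₀ₕ (β + 2 * κ) (β + 2 * κ + x) hP2 hQ2,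
    ← hrat b₀ (β + κ) (β + κ + x) hP1 hQ1]
  have hne : ∀ p q : ℝ, 0 < p → (β / p) ^ q ≠ 0 := fun p q hp => by positivity
  field_simp
end

section
/- Symmetry of the bivariate conditional exceedance distribution (Lemma on F₂ₑ): in the slice model with κ > 0 and b₀ = bₕ, for every x ≥ 0, ∫_{ℝ³} exp(−(κ+x)Λ₀ − κΛₕ) dμ = ∫_{ℝ³} exp(−κΛ₀ − (κ+x)Λₕ) dμ. Consequently, in the latent trawl model, P(X₀ ≤ x | X₀ > 0, X_h > 0) = P(X_h ≤ x | X₀ > 0, X_h > 0). -/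
open MeasureTheory ProbabilityTheory Real Set

/-- Symmetry of the bivariate conditional exceedance distribution: with
`Λ₀ = S₀ + S₀ₕ`, `Λₕ = S₀ₕ + Sₕ` in the slice model, `κ > 0` and `b₀ = bₕ`,
for all `x ≥ 0`, `E[e^{-(κ+x)Λ₀ - κΛₕ}] = E[e^{-κΛ₀ - (κ+x)Λₕ}]`; consequently
`P(X₀ ≤ x | X₀ > 0, Xₕ > 0) = P(Xₕ ≤ x | X₀ > 0, Xₕ > 0)` in the latent trawl model. -/
theorem conditional_df_symmetry (β b₀ b₀ₕ bₕ κ : ℝ) (hβ : 0 < β)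
    (hb₀ : 0 < b₀) (hb₀ₕ : 0 < b₀ₕ) (hbₕ : 0 < bₕ) (hκ : 0 < κ) (hbb : b₀ = bₕ) :
    ∀ x : ℝ, 0 ≤ x →
      (∫ s : ℝ × ℝ × ℝ,
          Real.exp (-(κ + x) * (s.1 + s.2.1) - κ * (s.2.1 + s.2.2))
          ∂(sliceMeasure b₀ b₀ₕ bₕ β))
        = (∫ s : ℝ × ℝ × ℝ,
          Real.exp (-κ * (s.1 + s.2.1) - (κ + x) * (s.2.1 + s.2.2))
          ∂(sliceMeasure b₀ b₀ₕ bₕ β)) := by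
  subst hbb
  intro x hx
  haveI : IsProbabilityMeasure (gammaMeasure b₀ β) := isProbabilityMeasure_gammaMeasure hb₀ hβ
  haveI : IsProbabilityMeasure (gammaMeasure b₀ₕ β) := isProbabilityMeasure_gammaMeasure hb₀ₕ hβ
  have h1 : ∀ s : ℝ × ℝ × ℝ,
      Real.exp (-(κ + x) * (s.1 + s.2.1) - κ * (s.2.1 + s.2.2))
        = Real.exp (-(κ + x) * s.1) *
          (Real.exp (-(κ + x + κ) * s.2.1) * Real.exp (-κ * s.2.2)) := by
    intro s
    rw [← Real.exp_add, ← Real.exp_add]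
    ring_nf
  have h2 : ∀ s : ℝ × ℝ × ℝ,
      Real.exp (-κ * (s.1 + s.2.1) - (κ + x) * (s.2.1 + s.2.2))
        = Real.exp (-κ * s.1) *
          (Real.exp (-(κ + x + κ) * s.2.1) * Real.exp (-(κ + x) * s.2.2)) := by
    intro s
    rw [← Real.exp_add, ← Real.exp_add]
    ring_nf
  simp only [h1, h2, sliceMeasure]
  rw [integral_prod_mul (μ := gammaMeasure b₀ β)
      (f := fun t => Real.exp (-(κ + x) * t))
      (g := fun p : ℝ × ℝ => Real.exp (-(κ + x + κ) * p.1) * Real.exp (-κ * p.2)),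
    integral_prod_mul (μ := gammaMeasure b₀ β)
      (f := fun t => Real.exp (-κ * t))
      (g := fun p : ℝ × ℝ => Real.exp (-(κ + x + κ) * p.1) * Real.exp (-(κ + x) * p.2)),
    integral_prod_mul (μ := gammaMeasure b₀ₕ β)
      (f := fun t => Real.exp (-(κ + x + κ) * t))
      (g := fun t => Real.exp (-κ * t)),
    integral_prod_mul (μ := gammaMeasure b₀ₕ β)
      (f := fun t => Real.exp (-(κ + x + κ) * t))
      (g := fun t => Real.exp (-(κ + x) * t))]
  ring
end

section
/- Asymptotic independence of the latent trawl model: let β, κ > 0, b₀ = bₕ > 0 and b₀ₕ ≥ 0, and define φ(u₁, u₂) = (1 + F₂ₑ⁻¹(u₂)/(β + 2κ + F₂ₑ⁻¹(u₁)))^{−b₀ₕ} (1 + F₂ₑ⁻¹(u₂)/(β+κ))^{−bₕ} for u₁, u₂ ∈ [0,1). Then the conditional tail dependence coefficient vanishes: φ(u, u) → 0 as u → 1 from the left. -/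
open MeasureTheory Real Set Filter

/-- Asymptotic independence of the latent trawl model: with `β, κ > 0`,
`b₀ = bₕ > 0`, `b₀ₕ ≥ 0`, and conditional tail dependence function
`φ(u₁, u₂) = (1 + F₂ₑ⁻¹(u₂)/(β + 2κ + F₂ₑ⁻¹(u₁)))^{-b₀ₕ} (1 + F₂ₑ⁻¹(u₂)/(β+κ))^{-bₕ}`,
the conditional tail dependence coefficient vanishes: `φ(u, u) → 0` as `u ↑ 1`. -/
theorem conditional_tail_dependence_coefficient_zero (β κ b₀ b₀ₕ bₕ : ℝ)
    (hβ : 0 < β) (hκ : 0 < κ) (hb₀ : 0 < b₀) (hbb : b₀ = bₕ) (hb₀ₕ : 0 ≤ b₀ₕ)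
    (F₂ₑ : ℝ → ℝ)
    (hF : ∀ x : ℝ, F₂ₑ x
      = 1 - (1 + x / (β + 2 * κ)) ^ (-b₀ₕ) * (1 + x / (β + κ)) ^ (-b₀))
    (Finv : ℝ → ℝ)
    (hFinv : ∀ u ∈ Ico (0 : ℝ) 1, 0 ≤ Finv u ∧ F₂ₑ (Finv u) = u)
    (φ : ℝ → ℝ → ℝ)
    (hφ : ∀ u₁ ∈ Ico (0 : ℝ) 1, ∀ u₂ ∈ Ico (0 : ℝ) 1,
      φ u₁ u₂ = (1 + Finv u₂ / (β + 2 * κ + Finv u₁)) ^ (-b₀ₕ)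
          * (1 + Finv u₂ / (β + κ)) ^ (-bₕ)) :
    Tendsto (fun u => φ u u) (nhdsWithin 1 (Iio 1)) (nhds 0) := by
  set c : ℝ := b₀ + b₀ₕ with hc
  have hcpos : 0 < c := by positivity
  -- the dominating function tends to 0
  have hdom : Tendsto (fun u : ℝ => (1 - u) ^ (b₀ / c)) (nhdsWithin 1 (Iio 1)) (nhds 0) := by
    have h1 : Tendsto (fun u : ℝ => 1 - u) (nhdsWithin 1 (Iio 1)) (nhds 0) := by
      have : Tendsto (fun u : ℝ => 1 - u) (nhds 1) (nhds 0) := by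
        exact (continuous_const.sub continuous_id).tendsto' 1 0 (by norm_num)
      exact this.mono_left nhdsWithin_le_nhds
    have h2 : Tendsto (fun x : ℝ => x ^ (b₀ / c)) (nhds 0) (nhds 0) := by
      have hcont : ContinuousAt (fun x : ℝ => x ^ (b₀ / c)) 0 :=
        Real.continuousAt_rpow_const 0 (b₀ / c) (Or.inr (by positivity))
      have h0 : (0 : ℝ) ^ (b₀ / c) = 0 := Real.zero_rpow (by positivity)
      simpa [h0] using hcont.tendsto
    exact h2.comp h1
  -- membership eventually
  have hmem : ∀ᶠ u in nhdsWithin 1 (Iio 1), u ∈ Ico (0 : ℝ) 1 := by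
    have : Ioo (0 : ℝ) 1 ∈ nhdsWithin (1 : ℝ) (Iio 1) :=
      Ioo_mem_nhdsLT_of_mem (by constructor <;> norm_num)
    filter_upwards [this] with u hu
    exact ⟨le_of_lt hu.1, hu.2⟩
  have hlb : ∀ᶠ u in nhdsWithin 1 (Iio 1), 0 ≤ φ u u := by
    filter_upwards [hmem] with u hu
    rw [hφ u hu u hu]
    obtain ⟨hx0, _⟩ := hFinv u hu
    have hA : (0:ℝ) < 1 + Finv u / (β + 2 * κ + Finv u) := by positivity
    have hB : (0:ℝ) < 1 + Finv u / (β + κ) := by positivity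
    positivity
  have hub : ∀ᶠ u in nhdsWithin 1 (Iio 1), φ u u ≤ (1 - u) ^ (b₀ / c) := by
    filter_upwards [hmem] with u hu
    obtain ⟨hx0, hFx⟩ := hFinv u hu
    set x := Finv u with hxdef
    have hA1 : (1:ℝ) ≤ 1 + x / (β + 2 * κ + x) := by
      have : 0 ≤ x / (β + 2 * κ + x) := by positivity
      linarith
    have hB1 : (1:ℝ) ≤ 1 + x / (β + κ) := by
      have : 0 ≤ x / (β + κ) := by positivity
      linarith
    have hC1 : (1:ℝ) ≤ 1 + x / (β + 2 * κ) := by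
      have : 0 ≤ x / (β + 2 * κ) := by positivity
      linarith
    have hBpos : (0:ℝ) < 1 + x / (β + κ) := by linarith
    have hCB : 1 + x / (β + 2 * κ) ≤ 1 + x / (β + κ) := by
      have : x / (β + 2 * κ) ≤ x / (β + κ) :=
        div_le_div_of_nonneg_left hx0 (by linarith) (by linarith)
      linarith
    -- from hFx : F₂ₑ x = u we get the key identity
    have hkey : (1 + x / (β + 2 * κ)) ^ (-b₀ₕ) * (1 + x / (β + κ)) ^ (-b₀) = 1 - u := by
      have := hF x
      rw [this] at hFx
      linarith
    -- B^{-c} ≤ 1 - u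
    have h1 : (1 + x / (β + κ)) ^ (-b₀ₕ) ≤ (1 + x / (β + 2 * κ)) ^ (-b₀ₕ) :=
      Real.rpow_le_rpow_of_nonpos (by linarith) hCB (by linarith)
    have hBc : (1 + x / (β + κ)) ^ (-c) ≤ 1 - u := by
      have hmul : (1 + x / (β + κ)) ^ (-b₀ₕ) * (1 + x / (β + κ)) ^ (-b₀)
          ≤ (1 + x / (β + 2 * κ)) ^ (-b₀ₕ) * (1 + x / (β + κ)) ^ (-b₀) := by
        apply mul_le_mul_of_nonneg_right h1 (le_of_lt (Real.rpow_pos_of_pos hBpos _))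
      have heq : (1 + x / (β + κ)) ^ (-b₀ₕ) * (1 + x / (β + κ)) ^ (-b₀)
          = (1 + x / (β + κ)) ^ (-c) := by
        rw [← Real.rpow_add hBpos, hc]; ring_nf
      rw [heq] at hmul
      linarith [hkey ▸ hmul]
    -- φ u u ≤ B^{-b₀}
    have hφle : φ u u ≤ (1 + x / (β + κ)) ^ (-b₀) := by
      rw [hφ u hu u hu, ← hbb, ← hxdef]
      have hle1 : (1 + x / (β + 2 * κ + x)) ^ (-b₀ₕ) ≤ 1 :=
        Real.rpow_le_one_of_one_le_of_nonpos hA1 (by linarith)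
      calc (1 + x / (β + 2 * κ + x)) ^ (-b₀ₕ) * (1 + x / (β + κ)) ^ (-b₀)
          ≤ 1 * (1 + x / (β + κ)) ^ (-b₀) :=
            mul_le_mul_of_nonneg_right hle1 (le_of_lt (Real.rpow_pos_of_pos hBpos _))
        _ = (1 + x / (β + κ)) ^ (-b₀) := one_mul _
    -- B^{-b₀} = (B^{-c})^{b₀/c} ≤ (1-u)^{b₀/c}
    have hrw : (1 + x / (β + κ)) ^ (-b₀) = ((1 + x / (β + κ)) ^ (-c)) ^ (b₀ / c) := by
      rw [← Real.rpow_mul (le_of_lt hBpos)]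
      congr 1
      field_simp
    have hfin : ((1 + x / (β + κ)) ^ (-c)) ^ (b₀ / c) ≤ (1 - u) ^ (b₀ / c) :=
      Real.rpow_le_rpow (le_of_lt (Real.rpow_pos_of_pos hBpos _)) hBc (by positivity)
    calc φ u u ≤ (1 + x / (β + κ)) ^ (-b₀) := hφle
      _ = ((1 + x / (β + κ)) ^ (-c)) ^ (b₀ / c) := hrw
      _ ≤ (1 - u) ^ (b₀ / c) := hfin
  exact tendsto_of_tendsto_of_tendsto_of_le_of_le' tendsto_const_nhds hdom hlb hub
end
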